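/- arXiv:1808.09755 — 3 statements merged into one kernel-verified Lean document; each statement's English description precedes it below -/
import Mathlib

section
/- Let p ∈ [2,3), let A be a d×q real matrix, a ∈ ℝ^d, h > 0, and let ζ be an ℝ^q-valued random vector with E|ζ|^p < ∞ and Eζ = 0. Then E|a + √h·Aζ|^p ≤ (1 + ((p-1)(p-2)/2)h)|a|^p + h(1 + p + h^{p/2 - 1})‖A‖^p E|ζ|^p, where ‖A‖² = Tr(AA*). -/
open MeasureTheory Matrix

lemma subadd {q : ℝ} (hq0 : 0 ≤ q) (hq1 : q ≤ 1) {x y : ℝ} (hx : 0 ≤ x) (hy : 0 ≤ y) :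
    (x + y) ^ q ≤ x ^ q + y ^ q := by
  have h := NNReal.rpow_add_le_add_rpow (Real.toNNReal x) (Real.toNNReal y) hq0 hq1
  have h2 := NNReal.coe_le_coe.2 h
  push_cast at h2
  rwa [Real.coe_toNNReal x hx, Real.coe_toNNReal y hy] at h2

lemma lem2 {p : ℝ} (hp2 : 2 ≤ p) (hp3 : p ≤ 3) {t : ℝ} (ht : 0 ≤ t) :
    (1 + t) ^ (p - 1) ≤ 1 + (p - 1) * t + t ^ (p - 1) := by
  set g : ℝ → ℝ := fun t => 1 + (p - 1) * t + t ^ (p - 1) - (1 + t) ^ (p - 1) with hg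
  have hd : ∀ x ∈ interior (Set.Ici (0:ℝ)), HasDerivAt g
      ((p - 1) + (p - 1) * x ^ (p - 2) - (p - 1) * (1 + x) ^ (p - 2)) x := by
    intro x hx
    rw [interior_Ici] at hx
    have hx0 : (0:ℝ) < x := hx
    have h1 : HasDerivAt (fun t : ℝ => 1 + (p - 1) * t) (p - 1) x := by
      simpa using ((hasDerivAt_id x).const_mul (p - 1)).const_add 1
    have h2 : HasDerivAt (fun t : ℝ => t ^ (p - 1)) ((p - 1) * x ^ (p - 1 - 1)) x :=
      Real.hasDerivAt_rpow_const (Or.inl hx0.ne')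
    have h3 : HasDerivAt (fun t : ℝ => (1 + t) ^ (p - 1)) (1 * (p - 1) * (1 + x) ^ (p - 1 - 1)) x := by
      have := HasDerivAt.rpow_const ((hasDerivAt_id x).const_add 1)
        (Or.inr (by linarith : (1:ℝ) ≤ p - 1))
      simpa using this
    have := (h1.add h2).sub h3
    rw [show p - 1 - 1 = p - 2 by ring] at this
    exact this.congr_deriv (by ring)
  have hmono : MonotoneOn g (Set.Ici 0) := by
    apply monotoneOn_of_deriv_nonneg (convex_Ici 0)
    · apply ContinuousOn.sub
      · apply ContinuousOn.add
        · exact (continuous_const.add (continuous_const.mul continuous_id)).continuousOn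
        · exact fun t _ => (Real.continuousAt_rpow_const t (p - 1) (Or.inr (by linarith))).continuousWithinAt
      · exact fun t _ => ((Real.continuousAt_rpow_const (1 + t) (p - 1) (Or.inr (by linarith))).comp
          (by fun_prop)).continuousWithinAt
    · intro x hx
      exact ((hd x hx).differentiableAt).differentiableWithinAt
    · intro x hx
      rw [(hd x hx).deriv]
      have hx0 : (0:ℝ) < x := by rw [interior_Ici] at hx; exact hx
      have hsub : (1 + x) ^ (p - 2) ≤ 1 + x ^ (p - 2) := by
        have h4 := subadd (q := p - 2) (by linarith) (by linarith) (by norm_num : (0:ℝ) ≤ 1) hx0.le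
        rwa [Real.one_rpow] at h4
      nlinarith [Real.rpow_nonneg hx0.le (p - 2)]
  have h0 : g 0 = 0 := by
    have : (0:ℝ) ^ (p - 1) = 0 := Real.zero_rpow (by intro hc; linarith [sub_eq_zero.1 hc])
    simp [hg, this]
  have hfin := hmono (Set.mem_Ici.2 (le_refl 0)) (Set.mem_Ici.2 ht) ht
  rw [h0] at hfin
  simp only [hg] at hfin
  linarith

-- (E1-t)
lemma lem3 {p : ℝ} (hp2 : 2 ≤ p) (hp3 : p ≤ 3) {t : ℝ} (ht : 0 ≤ t) :
    (1 + t) ^ p ≤ 1 + p * t + (p * (p - 1) / 2) * t ^ 2 + t ^ p := by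
  set f : ℝ → ℝ := fun t => 1 + p * t + (p * (p - 1) / 2) * t ^ 2 + t ^ p - (1 + t) ^ p with hf
  have hd : ∀ x ∈ interior (Set.Ici (0:ℝ)), HasDerivAt f
      (p + p * (p - 1) * x + p * x ^ (p - 1) - p * (1 + x) ^ (p - 1)) x := by
    intro x hx
    rw [interior_Ici] at hx
    have hx0 : (0:ℝ) < x := hx
    have h1 : HasDerivAt (fun t : ℝ => 1 + p * t + (p * (p - 1) / 2) * t ^ 2)
        (p + p * (p - 1) / 2 * (2 * x)) x := by
      have ha : HasDerivAt (fun t : ℝ => t ^ 2) (2 * x) x := by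
        simpa using hasDerivAt_pow 2 x
      exact ((((hasDerivAt_id x).const_mul p).const_add 1).add
        (ha.const_mul (p * (p - 1) / 2))).congr_deriv (by ring)
    have h2 : HasDerivAt (fun t : ℝ => t ^ p) (p * x ^ (p - 1)) x :=
      Real.hasDerivAt_rpow_const (Or.inl hx0.ne')
    have h3 : HasDerivAt (fun t : ℝ => (1 + t) ^ p) (1 * p * (1 + x) ^ (p - 1)) x := by
      have := HasDerivAt.rpow_const ((hasDerivAt_id x).const_add 1)
        (Or.inr (by linarith : (1:ℝ) ≤ p))
      simpa using this
    have := (h1.add h2).sub h3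
    exact this.congr_deriv (by ring)
  have hmono : MonotoneOn f (Set.Ici 0) := by
    apply monotoneOn_of_deriv_nonneg (convex_Ici 0)
    · apply ContinuousOn.sub
      · apply ContinuousOn.add
        · fun_prop
        · exact fun t _ => (Real.continuousAt_rpow_const t p (Or.inr (by linarith))).continuousWithinAt
      · exact fun t _ => ((Real.continuousAt_rpow_const (1 + t) p (Or.inr (by linarith))).comp
          (by fun_prop)).continuousWithinAt
    · intro x hx
      exact ((hd x hx).differentiableAt).differentiableWithinAt
    · intro x hx
      rw [(hd x hx).deriv]
      have hx0 : (0:ℝ) < x := by rw [interior_Ici] at hx; exact hx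
      have hkey := lem2 hp2 hp3 hx0.le
      nlinarith [Real.rpow_nonneg hx0.le (p - 1)]
  have h0 : f 0 = 0 := by
    have : (0:ℝ) ^ p = 0 := Real.zero_rpow (by positivity)
    simp [hf, this]
  have hfin := hmono (Set.mem_Ici.2 (le_refl 0)) (Set.mem_Ici.2 ht) ht
  rw [h0] at hfin
  simp only [hf] at hfin
  linarith

-- (E2a)
lemma lem4 {p : ℝ} (hp2 : 2 ≤ p) (hp3 : p ≤ 3) {t : ℝ} (ht : 0 ≤ t) (ht1 : t ≤ 1) :
    (1 - t) ^ p ≤ 1 - p * t + (p * (p - 1) / 2) * t ^ 2 + t ^ p := by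
  set f : ℝ → ℝ := fun t => 1 - p * t + (p * (p - 1) / 2) * t ^ 2 + t ^ p - (1 - t) ^ p with hf
  have hd : ∀ x ∈ interior (Set.Icc (0:ℝ) 1), HasDerivAt f
      (-p + p * (p - 1) * x + p * x ^ (p - 1) + p * (1 - x) ^ (p - 1)) x := by
    intro x hx
    rw [interior_Icc] at hx
    obtain ⟨hx0, hx1⟩ := hx
    have h1 : HasDerivAt (fun t : ℝ => 1 - p * t + (p * (p - 1) / 2) * t ^ 2)
        (-p + p * (p - 1) / 2 * (2 * x)) x := by
      have ha : HasDerivAt (fun t : ℝ => t ^ 2) (2 * x) x := by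
        simpa using hasDerivAt_pow 2 x
      have hb : HasDerivAt (fun t : ℝ => 1 - p * t) (-p) x := by
        simpa using (((hasDerivAt_id x).const_mul p).const_sub 1)
      exact hb.add (ha.const_mul (p * (p - 1) / 2))
    have h2 : HasDerivAt (fun t : ℝ => t ^ p) (p * x ^ (p - 1)) x :=
      Real.hasDerivAt_rpow_const (Or.inl hx0.ne')
    have h3 : HasDerivAt (fun t : ℝ => (1 - t) ^ p) (-1 * p * (1 - x) ^ (p - 1)) x := by
      have := HasDerivAt.rpow_const ((hasDerivAt_id x).const_sub 1)
        (Or.inr (by linarith : (1:ℝ) ≤ p))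
      simpa using this
    have := (h1.add h2).sub h3
    exact this.congr_deriv (by ring)
  have hmono : MonotoneOn f (Set.Icc 0 1) := by
    apply monotoneOn_of_deriv_nonneg (convex_Icc 0 1)
    · apply ContinuousOn.sub
      · apply ContinuousOn.add
        · fun_prop
        · exact fun t _ => (Real.continuousAt_rpow_const t p (Or.inr (by linarith))).continuousWithinAt
      · exact fun t _ => ((Real.continuousAt_rpow_const (1 - t) p (Or.inr (by linarith))).comp
          (by fun_prop)).continuousWithinAt
    · intro x hx
      exact ((hd x hx).differentiableAt).differentiableWithinAt
    · intro x hx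
      rw [(hd x hx).deriv]
      rw [interior_Icc] at hx
      obtain ⟨hx0, hx1⟩ := hx
      -- Bernoulli : 1 + (p-1) * (-x) ≤ (1 + (-x)) ^ (p - 1)
      have hb := one_add_mul_self_le_rpow_one_add (by linarith : (-1:ℝ) ≤ -x)
        (by linarith : (1:ℝ) ≤ p - 1)
      rw [show (1:ℝ) + -x = 1 - x by ring] at hb
      nlinarith [Real.rpow_nonneg hx0.le (p - 1)]
  have h0 : f 0 = 0 := by
    have : (0:ℝ) ^ p = 0 := Real.zero_rpow (by positivity)
    simp [hf, this]
  have hfin := hmono (Set.mem_Icc.2 ⟨le_refl 0, by norm_num⟩) (Set.mem_Icc.2 ⟨ht, ht1⟩) ht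
  rw [h0] at hfin
  simp only [hf] at hfin
  linarith

-- (E2b)
lemma lem5 {p : ℝ} (hp2 : 2 ≤ p) (hp3 : p ≤ 3) {t : ℝ} (ht : 1 ≤ t) :
    (t - 1) ^ p ≤ 1 - p * t + (p * (p - 1) / 2) * t ^ 2 + t ^ p := by
  set f : ℝ → ℝ := fun t => 1 - p * t + (p * (p - 1) / 2) * t ^ 2 + t ^ p - (t - 1) ^ p with hf
  have hd : ∀ x ∈ interior (Set.Ici (1:ℝ)), HasDerivAt f
      (-p + p * (p - 1) * x + p * x ^ (p - 1) - p * (x - 1) ^ (p - 1)) x := by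
    intro x hx
    rw [interior_Ici] at hx
    have hx1 : (1:ℝ) < x := hx
    have h1 : HasDerivAt (fun t : ℝ => 1 - p * t + (p * (p - 1) / 2) * t ^ 2)
        (-p + p * (p - 1) / 2 * (2 * x)) x := by
      have ha : HasDerivAt (fun t : ℝ => t ^ 2) (2 * x) x := by
        simpa using hasDerivAt_pow 2 x
      have hb : HasDerivAt (fun t : ℝ => 1 - p * t) (-p) x := by
        simpa using (((hasDerivAt_id x).const_mul p).const_sub 1)
      exact hb.add (ha.const_mul (p * (p - 1) / 2))
    have h2 : HasDerivAt (fun t : ℝ => t ^ p) (p * x ^ (p - 1)) x :=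
      Real.hasDerivAt_rpow_const (Or.inl (by linarith : x ≠ 0))
    have h3 : HasDerivAt (fun t : ℝ => (t - 1) ^ p) (1 * p * (x - 1) ^ (p - 1)) x := by
      have := HasDerivAt.rpow_const ((hasDerivAt_id x).sub_const 1)
        (Or.inr (by linarith : (1:ℝ) ≤ p))
      simpa using this
    have := (h1.add h2).sub h3
    exact this.congr_deriv (by ring)
  have hmono : MonotoneOn f (Set.Ici 1) := by
    apply monotoneOn_of_deriv_nonneg (convex_Ici 1)
    · apply ContinuousOn.sub
      · apply ContinuousOn.add
        · fun_prop
        · exact fun t _ => (Real.continuousAt_rpow_const t p (Or.inr (by linarith))).continuousWithinAt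
      · exact fun t _ => (ContinuousAt.rpow_const (by fun_prop)
          (Or.inr (by linarith : (0:ℝ) ≤ p))).continuousWithinAt
    · intro x hx
      exact ((hd x hx).differentiableAt).differentiableWithinAt
    · intro x hx
      rw [(hd x hx).deriv]
      rw [interior_Ici] at hx
      have hx1 : (1:ℝ) < x := hx
      have hmon : (x - 1) ^ (p - 1) ≤ x ^ (p - 1) :=
        Real.rpow_le_rpow (by linarith) (by linarith) (by linarith)
      have h5 : (1:ℝ) ≤ (p - 1) * x := by nlinarith
      have h6 : p ≤ p * ((p - 1) * x) := by
        calc p = p * 1 := by ring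
        _ ≤ p * ((p - 1) * x) := by
          apply mul_le_mul_of_nonneg_left h5 (by linarith)
      have h7 : p * (x - 1) ^ (p - 1) ≤ p * x ^ (p - 1) := by
        apply mul_le_mul_of_nonneg_left hmon (by linarith)
      linarith
  have h0 : 0 ≤ f 1 := by
    have h1 : (1:ℝ) - 1 = 0 := by ring
    have : ((1:ℝ) - 1) ^ p = 0 := by rw [h1]; exact Real.zero_rpow (by positivity)
    simp only [hf, this, Real.one_rpow]
    nlinarith
  have hfin := hmono (Set.mem_Ici.2 (le_refl 1)) (Set.mem_Ici.2 ht) ht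
  simp only [hf] at hfin h0
  linarith

lemma eA1 {p A : ℝ} (hp2 : 2 ≤ p) (hA : 0 ≤ A) : A ^ (p - 2) * A = A ^ (p - 1) := by
  rcases eq_or_lt_of_le hA with h | h
  · rw [← h, (Real.zero_rpow (by intro hc; linarith [sub_eq_zero.1 hc] : p - 1 ≠ 0))]
    ring
  · rw [show p - 1 = (p - 2) + 1 by ring, Real.rpow_add h, Real.rpow_one]

lemma eA2 {p A : ℝ} (hp2 : 2 ≤ p) (hA : 0 ≤ A) : A ^ (p - 2) * A ^ 2 = A ^ p := by
  rcases eq_or_lt_of_le hA with h | h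
  · rw [← h, (Real.zero_rpow (by positivity : p ≠ 0))]
    ring
  · rw [show p = (p - 2) + 2 by ring, Real.rpow_add h, ← Real.rpow_natCast A 2]
    norm_num

lemma lem6 {p : ℝ} (hp2 : 2 ≤ p) (hp3 : p ≤ 3) {A B : ℝ} (hA : 0 ≤ A) (hB : 0 ≤ B) :
    (A + B) ^ p ≤ A ^ p + p * A ^ (p - 1) * B + (p * (p - 1) / 2) * A ^ (p - 2) * B ^ 2 + B ^ p := by
  rcases eq_or_lt_of_le hA with h | hA'
  · rw [← h]
    have h1 : (0:ℝ) ^ p = 0 := Real.zero_rpow (by positivity)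
    have h2 : (0:ℝ) ^ (p - 1) = 0 := Real.zero_rpow (by intro hc; linarith [sub_eq_zero.1 hc])
    have h3 : (0:ℝ) ≤ (0:ℝ) ^ (p - 2) := Real.rpow_nonneg le_rfl _
    have h4 : (0:ℝ) ≤ p * (p - 1) / 2 * (0:ℝ) ^ (p - 2) * B ^ 2 :=
      mul_nonneg (mul_nonneg (by nlinarith) h3) (sq_nonneg B)
    rw [zero_add, h1, h2]
    linarith
  · have ht : (0:ℝ) ≤ B / A := by positivity
    have key := lem3 hp2 hp3 ht
    have hAp : (0:ℝ) ≤ A ^ p := Real.rpow_nonneg hA _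
    have h1 : (A + B) ^ p = A ^ p * (1 + B / A) ^ p := by
      rw [← Real.mul_rpow hA (by positivity)]
      congr 1
      field_simp
    have h2 : B ^ p = A ^ p * (B / A) ^ p := by
      rw [← Real.mul_rpow hA ht]
      congr 1
      field_simp
    have eA0 : A ^ (p - 1) * A = A ^ p := by
      rw [show p = (p - 1) + 1 by ring, Real.rpow_add hA', Real.rpow_one]
      ring_nf
    have e3 : A ^ p * (B / A) = A ^ (p - 1) * B := by
      rw [← eA0]
      field_simp
    have e4 : A ^ p * (B / A) ^ 2 = A ^ (p - 2) * B ^ 2 := by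
      rw [← eA2 hp2 hA]
      field_simp
    calc (A + B) ^ p = A ^ p * (1 + B / A) ^ p := h1
      _ ≤ A ^ p * (1 + p * (B / A) + (p * (p - 1) / 2) * (B / A) ^ 2 + (B / A) ^ p) :=
        mul_le_mul_of_nonneg_left key hAp
      _ = A ^ p + p * A ^ (p - 1) * B + (p * (p - 1) / 2) * A ^ (p - 2) * B ^ 2 + B ^ p := by
        linear_combination p * e3 + (p * (p - 1) / 2) * e4 - h2

lemma lem7 {p : ℝ} (hp2 : 2 ≤ p) (hp3 : p ≤ 3) {A B : ℝ} (hA : 0 ≤ A) (hB : 0 ≤ B) :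
    |A - B| ^ p ≤ A ^ p - p * A ^ (p - 1) * B + (p * (p - 1) / 2) * A ^ (p - 2) * B ^ 2 + B ^ p := by
  rcases eq_or_lt_of_le hA with h | hA'
  · rw [← h]
    have h1 : (0:ℝ) ^ p = 0 := Real.zero_rpow (by positivity)
    have h2 : (0:ℝ) ^ (p - 1) = 0 := Real.zero_rpow (by intro hc; linarith [sub_eq_zero.1 hc])
    have h3 : (0:ℝ) ≤ (0:ℝ) ^ (p - 2) := Real.rpow_nonneg le_rfl _
    have h4 : (0:ℝ) ≤ p * (p - 1) / 2 * (0:ℝ) ^ (p - 2) * B ^ 2 :=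
      mul_nonneg (mul_nonneg (by nlinarith) h3) (sq_nonneg B)
    rw [h1, h2, show |0 - B| = B by rw [abs_of_nonpos (by linarith)]; ring]
    linarith
  · have ht : (0:ℝ) ≤ B / A := by positivity
    have hAp : (0:ℝ) ≤ A ^ p := Real.rpow_nonneg hA _
    have h2 : B ^ p = A ^ p * (B / A) ^ p := by
      rw [← Real.mul_rpow hA ht]
      congr 1
      field_simp
    have eA0 : A ^ (p - 1) * A = A ^ p := by
      rw [show p = (p - 1) + 1 by ring, Real.rpow_add hA', Real.rpow_one]
      ring_nf
    have e3 : A ^ p * (B / A) = A ^ (p - 1) * B := by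
      rw [← eA0]
      field_simp
    have e4 : A ^ p * (B / A) ^ 2 = A ^ (p - 2) * B ^ 2 := by
      rw [← eA2 hp2 hA]
      field_simp
    rcases le_total (B / A) 1 with ht1 | ht1
    · have key := lem4 hp2 hp3 ht ht1
      have hBA : B ≤ A := (div_le_one hA').1 ht1
      have h1 : |A - B| ^ p = A ^ p * (1 - B / A) ^ p := by
        rw [← Real.mul_rpow hA (by rw [sub_nonneg]; exact ht1)]
        congr 1
        rw [abs_of_nonneg (by linarith)]
        field_simp
      calc |A - B| ^ p = A ^ p * (1 - B / A) ^ p := h1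
        _ ≤ A ^ p * (1 - p * (B / A) + (p * (p - 1) / 2) * (B / A) ^ 2 + (B / A) ^ p) :=
          mul_le_mul_of_nonneg_left key hAp
        _ = A ^ p - p * A ^ (p - 1) * B + (p * (p - 1) / 2) * A ^ (p - 2) * B ^ 2 + B ^ p := by
          linear_combination (-p) * e3 + (p * (p - 1) / 2) * e4 - h2
    · have key := lem5 hp2 hp3 ht1
      have hAB : A ≤ B := by
        rw [le_div_iff₀ hA'] at ht1
        linarith
      have h1 : |A - B| ^ p = A ^ p * (B / A - 1) ^ p := by
        rw [← Real.mul_rpow hA (by linarith : (0:ℝ) ≤ B / A - 1)]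
        congr 1
        rw [abs_of_nonpos (by linarith)]
        field_simp
        ring
      calc |A - B| ^ p = A ^ p * (B / A - 1) ^ p := h1
        _ ≤ A ^ p * (1 - p * (B / A) + (p * (p - 1) / 2) * (B / A) ^ 2 + (B / A) ^ p) :=
          mul_le_mul_of_nonneg_left key hAp
        _ = A ^ p - p * A ^ (p - 1) * B + (p * (p - 1) / 2) * A ^ (p - 2) * B ^ 2 + B ^ p := by
          linear_combination (-p) * e3 + (p * (p - 1) / 2) * e4 - h2

lemma lem8 {p A B u c : ℝ} (hp2 : 2 ≤ p) (hp3 : p ≤ 3) (hA : 0 ≤ A) (hB : 0 ≤ B) (hu : 0 ≤ u)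
    (hsq : u ^ 2 = A ^ 2 + 2 * c + B ^ 2) (hlo : (A - B) ^ 2 ≤ u ^ 2) (hhi : u ^ 2 ≤ (A + B) ^ 2) :
    u ^ p ≤ A ^ p + p * A ^ (p - 2) * c + (p * (p - 1) / 2) * A ^ (p - 2) * B ^ 2 + B ^ p := by
  set α := p / 2 * A ^ (p - 2) with hα
  have hAp2 : (0:ℝ) ≤ A ^ (p - 2) := Real.rpow_nonneg hA _
  have hα0 : 0 ≤ α := by positivity
  set H : ℝ → ℝ := fun v => v ^ (p / 2) - α * v with hH
  have hconv : ConvexOn ℝ (Set.Ici 0) H := by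
    apply ConvexOn.sub (convexOn_rpow (by linarith))
    have hcc := (concaveOn_id (convex_Ici (0:ℝ))).smul hα0
    simpa using hcc
  have hABsq : (A - B) ^ 2 ≤ (A + B) ^ 2 := by nlinarith
  have hseg : u ^ 2 ∈ segment ℝ ((A - B) ^ 2) ((A + B) ^ 2) := by
    rw [segment_eq_Icc hABsq]
    exact ⟨hlo, hhi⟩
  have hmax := hconv.le_on_segment (Set.mem_Ici.2 (by positivity)) (Set.mem_Ici.2 (by positivity))
    hseg
  have idu : (u ^ 2) ^ (p / 2) = u ^ p := by
    rw [← Real.rpow_natCast u 2, ← Real.rpow_mul hu]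
    congr 1
    push_cast
    ring
  have idAB : ((A + B) ^ 2) ^ (p / 2) = (A + B) ^ p := by
    rw [← Real.rpow_natCast (A + B) 2, ← Real.rpow_mul (by linarith)]
    congr 1
    push_cast
    ring
  have idAmB : ((A - B) ^ 2) ^ (p / 2) = |A - B| ^ p := by
    rw [← sq_abs, ← Real.rpow_natCast |A - B| 2, ← Real.rpow_mul (abs_nonneg _)]
    congr 1
    push_cast
    ring
  have e1 := eA1 hp2 hA
  have e2 := eA2 hp2 hA
  have expand1 : α * (A + B) ^ 2
      = p / 2 * A ^ p + p * A ^ (p - 1) * B + p / 2 * A ^ (p - 2) * B ^ 2 := by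
    simp only [hα]
    linear_combination (p / 2) * e2 + (p * B) * e1
  have expand2 : α * (A - B) ^ 2
      = p / 2 * A ^ p - p * A ^ (p - 1) * B + p / 2 * A ^ (p - 2) * B ^ 2 := by
    simp only [hα]
    linear_combination (p / 2) * e2 - (p * B) * e1
  have expand3 : α * u ^ 2
      = p / 2 * A ^ p + p * A ^ (p - 2) * c + p / 2 * A ^ (p - 2) * B ^ 2 := by
    simp only [hα]
    linear_combination (p / 2 * A ^ (p - 2)) * hsq + (p / 2) * e2
  have h6 := lem6 hp2 hp3 hA hB
  have h7 := lem7 hp2 hp3 hA hB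
  simp only [hH, idu, idAB, idAmB] at hmax
  rcases max_cases (|A - B| ^ p - α * (A - B) ^ 2) ((A + B) ^ p - α * (A + B) ^ 2) with
    ⟨heq, _⟩ | ⟨heq, _⟩ <;> rw [heq] at hmax <;> linarith

lemma lem9 {E : Type*} [NormedAddCommGroup E] [InnerProductSpace ℝ E]
    {p : ℝ} (hp2 : 2 ≤ p) (hp3 : p ≤ 3) (x y : E) :
    ‖x + y‖ ^ p ≤ ‖x‖ ^ p + p * ‖x‖ ^ (p - 2) * (inner ℝ x y : ℝ)
      + (p * (p - 1) / 2) * ‖x‖ ^ (p - 2) * ‖y‖ ^ 2 + ‖y‖ ^ p := by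
  apply lem8 hp2 hp3 (norm_nonneg x) (norm_nonneg y) (norm_nonneg (x + y))
    (norm_add_sq_real x y)
  · have h1 : |‖x‖ - ‖y‖| ≤ ‖x + y‖ := by
      have := abs_norm_sub_norm_le x (-y)
      simpa [sub_neg_eq_add] using this
    calc (‖x‖ - ‖y‖) ^ 2 = |‖x‖ - ‖y‖| ^ 2 := (sq_abs _).symm
      _ ≤ ‖x + y‖ ^ 2 := by
        apply pow_le_pow_left₀ (abs_nonneg _) h1
  · apply pow_le_pow_left₀ (norm_nonneg _) (norm_add_le x y)

-- pointwise bound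
lemma lemPW {E : Type*} [NormedAddCommGroup E] [InnerProductSpace ℝ E]
    {p h : ℝ} (hp2 : 2 ≤ p) (hp3 : p ≤ 3) (hh : 0 < h) (a v : E) :
    ‖a + Real.sqrt h • v‖ ^ p
      ≤ (1 + ((p - 1) * (p - 2) / 2) * h) * ‖a‖ ^ p
        + (p * ‖a‖ ^ (p - 2) * Real.sqrt h) * (inner ℝ a v : ℝ)
        + (h * ((p - 1) + h ^ (p / 2 - 1))) * ‖v‖ ^ p := by
  have hp0 : (0:ℝ) < p := by linarith
  have key := lem9 hp2 hp3 a (Real.sqrt h • v)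
  have hin : (inner ℝ a (Real.sqrt h • v) : ℝ) = Real.sqrt h * (inner ℝ a v : ℝ) :=
    real_inner_smul_right a v (Real.sqrt h)
  have hnorm : ‖Real.sqrt h • v‖ = Real.sqrt h * ‖v‖ := by
    rw [norm_smul, Real.norm_eq_abs, abs_of_nonneg (Real.sqrt_nonneg h)]
  have hn2 : ‖Real.sqrt h • v‖ ^ 2 = h * ‖v‖ ^ 2 := by
    rw [hnorm, mul_pow, Real.sq_sqrt hh.le]
  have hnp : ‖Real.sqrt h • v‖ ^ p = h * h ^ (p / 2 - 1) * ‖v‖ ^ p := by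
    rw [hnorm, Real.mul_rpow (Real.sqrt_nonneg h) (norm_nonneg v)]
    congr 1
    rw [Real.sqrt_eq_rpow, ← Real.rpow_mul hh.le,
      show 1 / 2 * p = 1 + (p / 2 - 1) by ring, Real.rpow_add hh, Real.rpow_one]
  -- Young's inequality
  have young : ‖a‖ ^ (p - 2) * ‖v‖ ^ 2 ≤ (p - 2) / p * ‖a‖ ^ p + 2 / p * ‖v‖ ^ p := by
    have hw1 : (0:ℝ) ≤ (p - 2) / p := div_nonneg (by linarith) (by linarith)
    have hw2 : (0:ℝ) ≤ 2 / p := by positivity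
    have hgm := Real.geom_mean_le_arith_mean2_weighted hw1 hw2
      (Real.rpow_nonneg (norm_nonneg a) p) (Real.rpow_nonneg (norm_nonneg v) p)
      (by field_simp; ring)
    have i1 : (‖a‖ ^ p) ^ ((p - 2) / p) = ‖a‖ ^ (p - 2) := by
      rw [← Real.rpow_mul (norm_nonneg a)]
      congr 1
      field_simp
    have i2 : (‖v‖ ^ p) ^ (2 / p) = ‖v‖ ^ 2 := by
      rw [← Real.rpow_mul (norm_nonneg v), ← Real.rpow_natCast ‖v‖ 2]
      congr 1
      field_simp
      norm_num
    rw [i1, i2] at hgm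
    exact hgm
  have c1 : (p * (p - 1) / 2) * h * ((p - 2) / p) = ((p - 1) * (p - 2) / 2) * h := by
    field_simp
  have c2 : (p * (p - 1) / 2) * h * (2 / p) = (p - 1) * h := by
    field_simp
  have young2 : p * (p - 1) / 2 * ‖a‖ ^ (p - 2) * (h * ‖v‖ ^ 2)
      ≤ ((p - 1) * (p - 2) / 2 * h) * ‖a‖ ^ p + ((p - 1) * h) * ‖v‖ ^ p := by
    calc p * (p - 1) / 2 * ‖a‖ ^ (p - 2) * (h * ‖v‖ ^ 2)
        = p * (p - 1) / 2 * h * (‖a‖ ^ (p - 2) * ‖v‖ ^ 2) := by ring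
      _ ≤ p * (p - 1) / 2 * h * ((p - 2) / p * ‖a‖ ^ p + 2 / p * ‖v‖ ^ p) :=
        mul_le_mul_of_nonneg_left young
          (mul_nonneg (div_nonneg (mul_nonneg (by linarith) (by linarith)) (by norm_num)) hh.le)
      _ = ((p * (p - 1) / 2) * h * ((p - 2) / p)) * ‖a‖ ^ p
          + ((p * (p - 1) / 2) * h * (2 / p)) * ‖v‖ ^ p := by ring
      _ = ((p - 1) * (p - 2) / 2 * h) * ‖a‖ ^ p + ((p - 1) * h) * ‖v‖ ^ p := by
        rw [c1, c2]
  rw [hin, hn2, hnp] at key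
  have e6 : p * ‖a‖ ^ (p - 2) * (Real.sqrt h * (inner ℝ a v : ℝ))
      = (p * ‖a‖ ^ (p - 2) * Real.sqrt h) * (inner ℝ a v : ℝ) := by ring
  have e7 : (h * ((p - 1) + h ^ (p / 2 - 1))) * ‖v‖ ^ p
      = ((p - 1) * h) * ‖v‖ ^ p + h * h ^ (p / 2 - 1) * ‖v‖ ^ p := by ring
  have e8 : (1 + ((p - 1) * (p - 2) / 2) * h) * ‖a‖ ^ p
      = ‖a‖ ^ p + ((p - 1) * (p - 2) / 2 * h) * ‖a‖ ^ p := by ring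
  linarith [key, young2, e6, e7, e8]

lemma lemFrob {d q : ℕ} (A : Matrix (Fin d) (Fin q) ℝ) (x : EuclideanSpace ℝ (Fin q)) :
    ‖(Matrix.toEuclideanLin A) x‖ ≤ Real.sqrt (Matrix.trace (A * Aᵀ)) * ‖x‖ := by
  have htr : Matrix.trace (A * Aᵀ) = ∑ i, ∑ j, (A i j) ^ 2 := by
    simp [Matrix.trace, Matrix.diag, Matrix.mul_apply, sq]
  have hx : ‖x‖ = Real.sqrt (∑ j, (x j) ^ 2) := by
    rw [EuclideanSpace.norm_eq]
    congr 1
    apply Finset.sum_congr rfl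
    intro j _
    rw [Real.norm_eq_abs, sq_abs]
  have hAx : ‖(Matrix.toEuclideanLin A) x‖ = Real.sqrt (∑ i, (∑ j, A i j * x j) ^ 2) := by
    rw [EuclideanSpace.norm_eq]
    congr 1
    apply Finset.sum_congr rfl
    intro i _
    rw [Real.norm_eq_abs, sq_abs]
    congr 1
  rw [hAx, hx, htr, ← Real.sqrt_mul (by positivity)]
  apply Real.sqrt_le_sqrt
  rw [Finset.sum_mul]
  apply Finset.sum_le_sum
  intro i _
  exact Finset.sum_mul_sq_le_sq_mul_sq _ _ _

set_option maxHeartbeats 2000000 in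
theorem stmt1 {Ω : Type*} [MeasurableSpace Ω] (μ : Measure Ω) [IsProbabilityMeasure μ]
    (d q : ℕ) (p : ℝ) (hp2 : 2 ≤ p) (hp3 : p < 3)
    (A : Matrix (Fin d) (Fin q) ℝ) (a : EuclideanSpace ℝ (Fin d)) (h : ℝ) (hh : 0 < h)
    (ζ : Ω → EuclideanSpace ℝ (Fin q))
    (hζp : MemLp ζ (ENNReal.ofReal p) μ)
    (hζ0 : ∫ ω, ζ ω ∂μ = 0) :
    ∫ ω, ‖a + Real.sqrt h • (Matrix.toEuclideanLin A) (ζ ω)‖ ^ p ∂μ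
      ≤ (1 + ((p - 1) * (p - 2) / 2) * h) * ‖a‖ ^ p
        + h * (1 + p + h ^ (p / 2 - 1)) * Real.sqrt (Matrix.trace (A * Aᵀ)) ^ p
          * ∫ ω, ‖ζ ω‖ ^ p ∂μ := by
  have hp0 : (0:ℝ) < p := by linarith
  set P := ENNReal.ofReal p with hP
  have hPne0 : P ≠ 0 := by
    simp [hP, ENNReal.ofReal_eq_zero]
    linarith
  have hPnetop : P ≠ ⊤ := ENNReal.ofReal_ne_top
  have hPtoReal : P.toReal = p := ENNReal.toReal_ofReal hp0.le
  have hone : (1:ENNReal) ≤ P := by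
    rw [hP, ← ENNReal.ofReal_one]
    exact ENNReal.ofReal_le_ofReal (by linarith)
  have hζint : Integrable ζ μ := hζp.integrable hone
  set T : EuclideanSpace ℝ (Fin q) →L[ℝ] EuclideanSpace ℝ (Fin d) :=
    (Matrix.toEuclideanLin A).toContinuousLinearMap with hT
  have hTapp : ∀ x, T x = (Matrix.toEuclideanLin A) x := fun x => rfl
  set g : Ω → EuclideanSpace ℝ (Fin d) := fun ω => T (ζ ω) with hg
  set M : ℝ := Real.sqrt (Matrix.trace (A * Aᵀ)) with hM
  have hM0 : 0 ≤ M := Real.sqrt_nonneg _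
  have hgmem : MemLp g P μ := T.comp_memLp' hζp
  have hXmem : MemLp (fun ω => a + Real.sqrt h • g ω) P μ :=
    (memLp_const a).add (hgmem.const_smul (Real.sqrt h))
  have hXint : Integrable (fun ω => ‖a + Real.sqrt h • g ω‖ ^ p) μ := by
    have := hXmem.integrable_norm_rpow hPne0 hPnetop
    simpa [hPtoReal] using this
  have hζnormint : Integrable (fun ω => ‖ζ ω‖ ^ p) μ := by
    have := hζp.integrable_norm_rpow hPne0 hPnetop
    simpa [hPtoReal] using this
  have hgnormint : Integrable (fun ω => ‖g ω‖ ^ p) μ := by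
    have := hgmem.integrable_norm_rpow hPne0 hPnetop
    simpa [hPtoReal] using this
  have hinnerint : Integrable (fun ω => (inner ℝ a (g ω) : ℝ)) μ := by
    have := ((innerSL ℝ a).comp T).integrable_comp hζint
    exact this
  have hinnerzero : ∫ ω, (inner ℝ a (g ω) : ℝ) ∂μ = 0 := by
    have heq : (fun ω => (inner ℝ a (g ω) : ℝ)) = fun ω => ((innerSL ℝ a).comp T) (ζ ω) := rfl
    rw [heq, ContinuousLinearMap.integral_comp_comm _ hζint, hζ0]
    simp
  -- pointwise bound and integral mono
  set c1 : ℝ := (1 + ((p - 1) * (p - 2) / 2) * h) * ‖a‖ ^ p with hc1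
  set c2 : ℝ := p * ‖a‖ ^ (p - 2) * Real.sqrt h with hc2
  set c3 : ℝ := h * ((p - 1) + h ^ (p / 2 - 1)) with hc3
  have step1 : ∫ ω, ‖a + Real.sqrt h • g ω‖ ^ p ∂μ
      ≤ ∫ ω, (c1 + c2 * (inner ℝ a (g ω) : ℝ) + c3 * ‖g ω‖ ^ p) ∂μ := by
    apply integral_mono hXint
    · exact ((integrable_const c1).add (hinnerint.const_mul c2)).add (hgnormint.const_mul c3)
    · intro ω
      exact lemPW hp2 hp3.le hh a (g ω)
  have i1 : Integrable (fun _ : Ω => c1) μ := integrable_const c1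
  have i2 : Integrable (fun ω => c2 * (inner ℝ a (g ω) : ℝ)) μ := hinnerint.const_mul c2
  have i3 : Integrable (fun ω => c3 * ‖g ω‖ ^ p) μ := hgnormint.const_mul c3
  have i12 : Integrable (fun ω => c1 + c2 * (inner ℝ a (g ω) : ℝ)) μ := i1.add i2
  have step2 : ∫ ω, (c1 + c2 * (inner ℝ a (g ω) : ℝ) + c3 * ‖g ω‖ ^ p) ∂μ
      = c1 + c3 * ∫ ω, ‖g ω‖ ^ p ∂μ := by
    rw [integral_add i12 i3, integral_add i1 i2,
      integral_const, integral_const_mul, integral_const_mul, hinnerzero]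
    simp
  have step4 : ∫ ω, ‖g ω‖ ^ p ∂μ ≤ M ^ p * ∫ ω, ‖ζ ω‖ ^ p ∂μ := by
    rw [← integral_const_mul]
    apply integral_mono hgnormint (hζnormint.const_mul _)
    intro ω
    calc ‖g ω‖ ^ p ≤ (M * ‖ζ ω‖) ^ p := by
          apply Real.rpow_le_rpow (norm_nonneg _) _ hp0.le
          show ‖(Matrix.toEuclideanLin A) (ζ ω)‖ ≤ M * ‖ζ ω‖
          exact lemFrob A (ζ ω)
      _ = M ^ p * ‖ζ ω‖ ^ p := Real.mul_rpow hM0 (norm_nonneg _)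
  have hInonneg : 0 ≤ ∫ ω, ‖ζ ω‖ ^ p ∂μ :=
    integral_nonneg fun ω => Real.rpow_nonneg (norm_nonneg _) _
  have hc30 : 0 ≤ c3 := by
    have := Real.rpow_nonneg hh.le (p / 2 - 1)
    rw [hc3]
    nlinarith
  have step5 : c3 * ∫ ω, ‖g ω‖ ^ p ∂μ
      ≤ h * (1 + p + h ^ (p / 2 - 1)) * M ^ p * ∫ ω, ‖ζ ω‖ ^ p ∂μ := by
    have hb1 : c3 * ∫ ω, ‖g ω‖ ^ p ∂μ ≤ c3 * (M ^ p * ∫ ω, ‖ζ ω‖ ^ p ∂μ) :=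
      mul_le_mul_of_nonneg_left step4 hc30
    have hb2 : c3 * (M ^ p * ∫ ω, ‖ζ ω‖ ^ p ∂μ)
        ≤ (h * (1 + p + h ^ (p / 2 - 1))) * (M ^ p * ∫ ω, ‖ζ ω‖ ^ p ∂μ) := by
      apply mul_le_mul_of_nonneg_right _ (mul_nonneg (Real.rpow_nonneg hM0 _) hInonneg)
      rw [hc3]
      have := Real.rpow_nonneg hh.le (p / 2 - 1)
      nlinarith
    calc c3 * ∫ ω, ‖g ω‖ ^ p ∂μ ≤ c3 * (M ^ p * ∫ ω, ‖ζ ω‖ ^ p ∂μ) := hb1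
      _ ≤ (h * (1 + p + h ^ (p / 2 - 1))) * (M ^ p * ∫ ω, ‖ζ ω‖ ^ p ∂μ) := hb2
      _ = h * (1 + p + h ^ (p / 2 - 1)) * M ^ p * ∫ ω, ‖ζ ω‖ ^ p ∂μ := by ring
  have hfinal : ∫ ω, ‖a + Real.sqrt h • g ω‖ ^ p ∂μ
      ≤ c1 + h * (1 + p + h ^ (p / 2 - 1)) * M ^ p * ∫ ω, ‖ζ ω‖ ^ p ∂μ := by
    rw [step2] at step1
    linarith [step1, step5]
  simpa [hg, hTapp, hc1, hM] using hfinal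
end

section
/- C² bound for the Euler transition (d = q = 1, zero drift): let σ ∈ C² with σ', σ'' bounded and σσ'' bounded, let ℰ_h(x,z) = x + √h σ(x)z and Pf(x) = E f(ℰ_h(x,Z)), Z ∼ 𝒩(0,1). If f is C² with bounded f', f'', then ‖(Pf)''‖_∞ ≤ ‖f''‖_∞·(1 + (‖σ'‖_∞² + ‖σσ''‖_∞)h). -/
open MeasureTheory ProbabilityTheory Real Filter
open scoped NNReal ENNReal

lemma my_pdf_eq (z : ℝ) : gaussianPDFReal 0 1 z = (Real.sqrt (2*π))⁻¹ * Real.exp (-z^2/2) := by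
  simp [gaussianPDFReal]

lemma my_pdf_deriv (z : ℝ) :
    HasDerivAt (gaussianPDFReal 0 1) (-z * gaussianPDFReal 0 1 z) z := by
  have h1 : HasDerivAt (fun z : ℝ => -z^2/2) (-z) z := by
    have := ((hasDerivAt_pow 2 z).neg).div_const 2
    exact this.congr_deriv (by push_cast; ring)
  have h2 := (h1.exp).const_mul (Real.sqrt (2*π))⁻¹
  have : (fun z : ℝ => (Real.sqrt (2*π))⁻¹ * Real.exp (-z^2/2)) = gaussianPDFReal 0 1 := by
    funext z; rw [my_pdf_eq]
  rw [this] at h2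
  refine h2.congr_deriv ?_
  rw [my_pdf_eq]; ring

lemma my_integral_eq (g : ℝ → ℝ) :
    ∫ z, g z ∂(gaussianReal 0 1) = ∫ z, gaussianPDFReal 0 1 z * g z := by
  rw [gaussianReal_of_var_ne_zero 0 one_ne_zero]
  have hd : (gaussianPDF 0 1) = fun x => ((gaussianPDFReal 0 1 x).toNNReal : ℝ≥0∞) := by
    funext x; rfl
  rw [hd, integral_withDensity_eq_integral_smul
    ((measurable_gaussianPDFReal 0 1).real_toNNReal) g]
  congr 1; funext x
  simp [NNReal.smul_def, Real.coe_toNNReal _ (gaussianPDFReal_nonneg 0 1 x)]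

lemma my_integrable_iff (g : ℝ → ℝ) :
    Integrable g (gaussianReal 0 1) ↔
      Integrable (fun z => gaussianPDFReal 0 1 z * g z) volume := by
  rw [gaussianReal_of_var_ne_zero 0 one_ne_zero]
  have hd : (gaussianPDF 0 1) = fun x => ((gaussianPDFReal 0 1 x).toNNReal : ℝ≥0∞) := by
    funext x; rfl
  rw [hd, integrable_withDensity_iff_integrable_smul
    ((measurable_gaussianPDFReal 0 1).real_toNNReal)]
  constructor <;> intro h <;> refine h.congr (ae_of_all _ fun x => ?_) <;>
    simp [NNReal.smul_def, Real.coe_toNNReal _ (gaussianPDFReal_nonneg 0 1 x)]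


lemma exp_eq (z : ℝ) : Real.exp (-z^2/2) = Real.exp (-(1/2 : ℝ) * z^2) := by ring_nf

lemma my_integrable_abs : Integrable (fun z : ℝ => |z|) (gaussianReal 0 1) := by
  rw [my_integrable_iff]
  have h : Integrable (fun z : ℝ => z * Real.exp (-(1/2 : ℝ) * z^2)) volume :=
    integrable_mul_exp_neg_mul_sq (by norm_num)
  have h2 := h.abs
  refine (h2.const_mul ((Real.sqrt (2*π))⁻¹)).congr (ae_of_all _ fun z => ?_)
  simp only [my_pdf_eq, exp_eq, abs_mul, abs_of_nonneg (Real.exp_pos _).le]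
  ring

lemma my_integrable_id : Integrable (fun z : ℝ => z) (gaussianReal 0 1) := by
  refine my_integrable_abs.mono' ?_ (ae_of_all _ fun z => by simp)
  exact continuous_id.aestronglyMeasurable

lemma my_integrable_sq : Integrable (fun z : ℝ => z^2) (gaussianReal 0 1) := by
  rw [my_integrable_iff]
  have h : Integrable (fun z : ℝ => z ^ (2:ℝ) * Real.exp (-(1/2 : ℝ) * z^2)) volume :=
    integrable_rpow_mul_exp_neg_mul_sq (by norm_num) (by norm_num)
  refine (h.const_mul ((Real.sqrt (2*π))⁻¹)).congr (ae_of_all _ fun z => ?_)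
  simp only [my_pdf_eq, exp_eq, show (2:ℝ) = ((2:ℕ):ℝ) from by norm_num, Real.rpow_natCast]
  ring

/-- any function bounded by a + b|z| + c z² and a.e.s.m. is integrable wrt the gaussian -/
lemma my_integrable_poly (a b c : ℝ) :
    Integrable (fun z : ℝ => a + b * |z| + c * z^2) (gaussianReal 0 1) :=
  ((integrable_const a).add (my_integrable_abs.const_mul b)).add
    ((my_integrable_sq.const_mul c))

lemma my_pdf_tendsto_top : Tendsto (gaussianPDFReal 0 1) atTop (nhds 0) := by
  have : Tendsto (fun z : ℝ => (Real.sqrt (2*π))⁻¹ * Real.exp (-z^2/2)) atTop (nhds ((Real.sqrt (2*π))⁻¹ * 0)) := by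
    refine Tendsto.const_mul _ (Real.tendsto_exp_atBot.comp ?_)
    apply Tendsto.atBot_div_const (by norm_num)
    exact tendsto_neg_atBot_iff.mpr (tendsto_pow_atTop (by norm_num))
  simp only [mul_zero] at this
  exact this.congr fun z => (my_pdf_eq z).symm

lemma my_pdf_tendsto_bot : Tendsto (gaussianPDFReal 0 1) atBot (nhds 0) := by
  have h := my_pdf_tendsto_top.comp (tendsto_neg_atBot_atTop : Tendsto (fun z:ℝ => -z) atBot atTop)
  refine h.congr fun z => ?_
  simp only [Function.comp_apply, my_pdf_eq]; ring_nf

lemma my_mul_pdf_tendsto_top : Tendsto (fun z : ℝ => z * gaussianPDFReal 0 1 z) atTop (nhds 0) := by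
  have key : Tendsto (fun z : ℝ => z * Real.exp (-z^2/2)) atTop (nhds 0) := by
    have h1 : Tendsto (fun z : ℝ => 2 * (z/2 * Real.exp (-(z/2)))) atTop (nhds (2*0)) := by
      refine Tendsto.const_mul _ ?_
      have := (tendsto_pow_mul_exp_neg_atTop_nhds_zero 1).comp
        (tendsto_id.atTop_div_const (show (0:ℝ) < 2 by norm_num))
      simpa [Function.comp_def] using this
    simp only [mul_zero] at h1
    refine tendsto_of_tendsto_of_tendsto_of_le_of_le' tendsto_const_nhds h1 ?_ ?_
    · filter_upwards [eventually_ge_atTop (0:ℝ)] with z hz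
      positivity
    · filter_upwards [eventually_ge_atTop (2:ℝ)] with z hz
      have hz0 : (0:ℝ) ≤ z := by linarith
      have : Real.exp (-z^2/2) ≤ Real.exp (-(z/2)) := by
        apply Real.exp_le_exp.mpr; nlinarith
      calc z * Real.exp (-z^2/2) ≤ z * Real.exp (-(z/2)) := by
            apply mul_le_mul_of_nonneg_left this hz0
        _ = 2 * (z/2 * Real.exp (-(z/2))) := by ring
  have : Tendsto (fun z : ℝ => (Real.sqrt (2*π))⁻¹ * (z * Real.exp (-z^2/2))) atTop (nhds ((Real.sqrt (2*π))⁻¹ * 0)) := key.const_mul _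
  simp only [mul_zero] at this
  refine this.congr fun z => ?_
  rw [my_pdf_eq]; ring

lemma my_mul_pdf_tendsto_bot : Tendsto (fun z : ℝ => z * gaussianPDFReal 0 1 z) atBot (nhds 0) := by
  have h := my_mul_pdf_tendsto_top.comp (tendsto_neg_atBot_atTop : Tendsto (fun z:ℝ => -z) atBot atTop)
  have h2 := h.neg
  simp only [neg_zero] at h2
  refine h2.congr fun z => ?_
  simp only [Function.comp_apply, my_pdf_eq]; ring_nf

lemma my_stein (F F' : ℝ → ℝ) (hF : ∀ z, HasDerivAt F (F' z) z)
    (h1 : Integrable (fun z => z * F z) (gaussianReal 0 1))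
    (h2 : Integrable F' (gaussianReal 0 1))
    (htop : Tendsto (fun z => F z * gaussianPDFReal 0 1 z) atTop (nhds 0))
    (hbot : Tendsto (fun z => F z * gaussianPDFReal 0 1 z) atBot (nhds 0)) :
    ∫ z, z * F z ∂(gaussianReal 0 1) = ∫ z, F' z ∂(gaussianReal 0 1) := by
  set p := gaussianPDFReal 0 1 with hp
  -- volume-level integrabilities
  have h1v : Integrable (fun z => p z * (z * F z)) volume := (my_integrable_iff _).mp h1
  have h2v : Integrable (fun z => p z * F' z) volume := (my_integrable_iff _).mp h2
  -- G = -(F * p); G' z = z * F z * p z - F' z * p z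
  set G : ℝ → ℝ := fun z => -(F z * p z) with hG
  set G' : ℝ → ℝ := fun z => p z * (z * F z) - p z * F' z with hG'
  have hderiv : ∀ z, HasDerivAt G (G' z) z := by
    intro z
    have := ((hF z).mul (my_pdf_deriv z)).neg
    refine this.congr_deriv ?_
    simp only [hG', hp]; ring
  have hGint : Integrable G' volume := h1v.sub h2v
  have htopG : Tendsto G atTop (nhds 0) := by simpa using htop.neg
  have hbotG : Tendsto G atBot (nhds 0) := by simpa using hbot.neg
  have hIoi : ∫ z in Set.Ioi (0:ℝ), G' z = 0 - G 0 :=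
    integral_Ioi_of_hasDerivAt_of_tendsto' (fun z _ => hderiv z) hGint.integrableOn htopG
  have hIic : ∫ z in Set.Iic (0:ℝ), G' z = G 0 - 0 :=
    integral_Iic_of_hasDerivAt_of_tendsto' (fun z _ => hderiv z) hGint.integrableOn hbotG
  have htot : ∫ z, G' z = 0 := by
    rw [← intervalIntegral.integral_Iic_add_Ioi (b := (0:ℝ)) hGint.integrableOn hGint.integrableOn, hIoi, hIic]
    ring
  have : (∫ z, p z * (z * F z)) - (∫ z, p z * F' z) = 0 := by
    rw [← integral_sub h1v h2v]; exact htot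
  rw [my_integral_eq, my_integral_eq]
  linarith

lemma my_moment_one : ∫ z, z ∂(gaussianReal 0 1) = 0 := by
  have := my_stein (fun _ => 1) (fun _ => 0) (fun z => hasDerivAt_const z 1)
    (by simpa using my_integrable_id) (integrable_const 0)
    (by simpa using my_pdf_tendsto_top) (by simpa using my_pdf_tendsto_bot)
  simpa using this

lemma my_moment_two : ∫ z, z^2 ∂(gaussianReal 0 1) = 1 := by
  have := my_stein (fun z => z) (fun _ => 1) (fun z => hasDerivAt_id z)
    (by simpa [sq] using my_integrable_sq) (integrable_const 1)
    my_mul_pdf_tendsto_top my_mul_pdf_tendsto_bot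
  rw [integral_const] at this
  simp only [measure_univ, ENNReal.toReal_one, probReal_univ, smul_eq_mul, one_mul] at this
  rw [← this]
  congr 1; funext z; ring
set_option maxHeartbeats 1000000 in
/-- C² bound for the Euler transition (d = q = 1, zero drift). -/
theorem stmt17 (σ f : ℝ → ℝ) (h : ℝ) (hh : 0 < h)
    (hσ1 : Differentiable ℝ σ) (hσ2 : Differentiable ℝ (deriv σ))
    (B1 B2 B3 B4 : ℝ)
    (hB1 : ∀ x, |deriv σ x| ≤ B1)
    (hB2 : ∀ x, |σ x * deriv (deriv σ) x| ≤ B2)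
    (hf1 : Differentiable ℝ f) (hf2 : Differentiable ℝ (deriv f))
    (hB4 : ∀ x, |deriv f x| ≤ B4)
    (hB3 : ∀ x, |deriv (deriv f) x| ≤ B3) :
    ∀ x : ℝ,
      |deriv (deriv (fun y =>
          ∫ z, f (y + Real.sqrt h * σ y * z) ∂(gaussianReal 0 1))) x|
        ≤ B3 * (1 + (B1 ^ 2 + B2) * h) := by
  intro x
  set γ := gaussianReal 0 1 with hγdef
  set s := Real.sqrt h with hsdef
  have hs0 : 0 ≤ s := Real.sqrt_nonneg h
  have hss : s * s = h := Real.mul_self_sqrt hh.le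
  have hB10 : 0 ≤ B1 := (abs_nonneg _).trans (hB1 0)
  have hB20 : 0 ≤ B2 := (abs_nonneg _).trans (hB2 0)
  have hB30 : 0 ≤ B3 := (abs_nonneg _).trans (hB3 0)
  have hB40 : 0 ≤ B4 := (abs_nonneg _).trans (hB4 0)
  have hσ'c : Continuous (deriv σ) := hσ2.continuous
  have hf'c : Continuous (deriv f) := hf2.continuous
  have hfc : Continuous f := hf1.continuous
  have hmf'' : Measurable (deriv (deriv f)) := measurable_deriv _
  have haff : ∀ (c d : ℝ), Continuous (fun z : ℝ => c + d * z) := fun c d =>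
    continuous_const.add (continuous_const.mul continuous_id)
  have haffm : ∀ (c d : ℝ), Measurable (fun z : ℝ => c + d * z) := fun c d =>
    (haff c d).measurable
  -- Lipschitz estimates
  have lip : ∀ (g : ℝ → ℝ), Differentiable ℝ g → ∀ (C : ℝ), (∀ t, |deriv g t| ≤ C) →
      ∀ a b : ℝ, |g a - g b| ≤ C * |a - b| := by
    intro g hg C hC a b
    simpa [Real.norm_eq_abs] using
      Convex.norm_image_sub_le_of_norm_deriv_le (fun t _ => hg t)
        (fun t _ => by simpa [Real.norm_eq_abs] using hC t) convex_univ
        (Set.mem_univ b) (Set.mem_univ a)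
  have lipf := lip f hf1 B4 hB4
  have lipf' := lip (deriv f) hf2 B3 hB3
  have lipσ := lip σ hσ1 B1 hB1
  -- pointwise bounds
  have habs1 : ∀ (w z : ℝ), |1 + s * deriv σ w * z| ≤ 1 + s * B1 * |z| := by
    intro w z
    calc |1 + s * deriv σ w * z| ≤ |1| + |s * deriv σ w * z| := abs_add_le _ _
      _ = 1 + s * |deriv σ w| * |z| := by
          rw [abs_one, abs_mul, abs_mul, abs_of_nonneg hs0]
      _ ≤ 1 + s * B1 * |z| := by gcongr; exact hB1 w
  have hbnd1 : ∀ (w z : ℝ),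
      |deriv f (w + s * σ w * z) * (1 + s * deriv σ w * z)| ≤ B4 * (1 + s * B1 * |z|) := by
    intro w z
    rw [abs_mul]
    exact mul_le_mul (hB4 _) (habs1 w z) (abs_nonneg _) hB40
  -- integrabilities
  have i1 : ∀ w, Integrable (fun z => deriv f (w + s * σ w * z) * (1 + s * deriv σ w * z)) γ := by
    intro w
    refine (my_integrable_poly B4 (B4 * (s * B1)) 0).mono'
      (((hf'c.comp (haff w (s * σ w))).mul (haff 1 (s * deriv σ w))).aestronglyMeasurable)
      (ae_of_all _ fun z => ?_)
    rw [Real.norm_eq_abs]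
    calc |deriv f (w + s * σ w * z) * (1 + s * deriv σ w * z)| ≤ B4 * (1 + s * B1 * |z|) :=
          hbnd1 w z
      _ = B4 + B4 * (s * B1) * |z| + 0 * z ^ 2 := by ring
  have i2 : ∀ w, Integrable (fun z => z * deriv f (w + s * σ w * z)) γ := by
    intro w
    refine (my_integrable_poly 0 B4 0).mono'
      ((continuous_id.mul (hf'c.comp (haff w (s * σ w)))).aestronglyMeasurable)
      (ae_of_all _ fun z => ?_)
    rw [Real.norm_eq_abs, abs_mul]
    calc |z| * |deriv f (w + s * σ w * z)| ≤ |z| * B4 :=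
          mul_le_mul_of_nonneg_left (hB4 _) (abs_nonneg z)
      _ = 0 + B4 * |z| + 0 * z ^ 2 := by ring
  have i3 : ∀ w, Integrable (fun z => deriv (deriv f) (w + s * σ w * z)) γ := by
    intro w
    refine (my_integrable_poly B3 0 0).mono'
      ((hmf''.comp (haffm w (s * σ w))).aestronglyMeasurable)
      (ae_of_all _ fun z => ?_)
    rw [Real.norm_eq_abs]
    calc |deriv (deriv f) (w + s * σ w * z)| ≤ B3 := hB3 _
      _ = B3 + 0 * |z| + 0 * z ^ 2 := by ring
  -- Stein's identity applied to f' along the Euler scheme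
  have hstein : ∀ w, ∫ z, z * deriv f (w + s * σ w * z) ∂γ
      = (s * σ w) * ∫ z, deriv (deriv f) (w + s * σ w * z) ∂γ := by
    intro w
    have hFd : ∀ z, HasDerivAt (fun z => deriv f (w + s * σ w * z))
        (deriv (deriv f) (w + s * σ w * z) * (s * σ w)) z := by
      intro z
      have hi : HasDerivAt (fun z : ℝ => w + s * σ w * z) (s * σ w) z := by
        simpa using ((hasDerivAt_id z).const_mul (s * σ w)).const_add w
      exact (hf2 _).hasDerivAt.comp z hi
    have htop : Tendsto (fun z => deriv f (w + s * σ w * z) * gaussianPDFReal 0 1 z)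
        atTop (nhds 0) := by
      have hub := my_pdf_tendsto_top.const_mul B4
      have hlb := my_pdf_tendsto_top.const_mul (-B4)
      rw [mul_zero] at hub hlb
      refine tendsto_of_tendsto_of_tendsto_of_le_of_le' hlb hub ?_ ?_ <;>
        · filter_upwards with z
          have hp := gaussianPDFReal_nonneg 0 1 z
          have := hB4 (w + s * σ w * z)
          rw [abs_le] at this
          nlinarith [this.1, this.2]
    have hbot : Tendsto (fun z => deriv f (w + s * σ w * z) * gaussianPDFReal 0 1 z)
        atBot (nhds 0) := by
      have hub := my_pdf_tendsto_bot.const_mul B4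
      have hlb := my_pdf_tendsto_bot.const_mul (-B4)
      rw [mul_zero] at hub hlb
      refine tendsto_of_tendsto_of_tendsto_of_le_of_le' hlb hub ?_ ?_ <;>
        · filter_upwards with z
          have hp := gaussianPDFReal_nonneg 0 1 z
          have := hB4 (w + s * σ w * z)
          rw [abs_le] at this
          nlinarith [this.1, this.2]
    have hst := my_stein _ _ hFd (i2 w) ((i3 w).mul_const (s * σ w)) htop hbot
    rw [hst, integral_mul_const, mul_comm]
  -- first derivative under the integral
  have hg1 : ∀ y, HasDerivAt (fun w => ∫ z, f (w + s * σ w * z) ∂γ)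
      (∫ z, deriv f (y + s * σ y * z) * (1 + s * deriv σ y * z) ∂γ) y := by
    intro y
    have main := hasDerivAt_integral_of_dominated_loc_of_deriv_le (Metric.ball_mem_nhds y one_pos)
      (F := fun w z => f (w + s * σ w * z))
      (F' := fun w z => deriv f (w + s * σ w * z) * (1 + s * deriv σ w * z))
      (μ := γ) (bound := fun z => B4 + B4 * (s * B1) * |z| + 0 * z ^ 2)
      (Filter.Eventually.of_forall fun w => (hfc.comp (haff w (s * σ w))).aestronglyMeasurable)
      ?_
      (((hf'c.comp (haff y (s * σ y))).mul (haff 1 (s * deriv σ y))).aestronglyMeasurable)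
      (ae_of_all _ fun z w _ => ?_)
      (my_integrable_poly _ _ _)
      (ae_of_all _ fun z w _ => ?_)
    · exact main.2
    · -- integrability of the base function
      refine (my_integrable_poly (|f y|) (B4 * (s * |σ y|)) 0).mono'
        ((hfc.comp (haff y (s * σ y))).aestronglyMeasurable)
        (ae_of_all _ fun z => ?_)
      rw [Real.norm_eq_abs]
      calc |f (y + s * σ y * z)| = |f y + (f (y + s * σ y * z) - f y)| := by ring_nf
        _ ≤ |f y| + |f (y + s * σ y * z) - f y| := abs_add_le _ _
        _ ≤ |f y| + B4 * |y + s * σ y * z - y| := by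
            have := lipf (y + s * σ y * z) y
            linarith
        _ = |f y| + B4 * (s * |σ y| * |z|) := by
            rw [add_sub_cancel_left, abs_mul, abs_mul, abs_of_nonneg hs0]
        _ = |f y| + B4 * (s * |σ y|) * |z| + 0 * z ^ 2 := by ring
    · -- the bound
      rw [Real.norm_eq_abs]
      calc |deriv f (w + s * σ w * z) * (1 + s * deriv σ w * z)| ≤ B4 * (1 + s * B1 * |z|) :=
            hbnd1 w z
        _ = B4 + B4 * (s * B1) * |z| + 0 * z ^ 2 := by ring
    · -- differentiability in the parameter
      have hi : HasDerivAt (fun w : ℝ => w + s * σ w * z) (1 + s * deriv σ w * z) w :=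
        (hasDerivAt_id w).add (((hσ1 w).hasDerivAt.const_mul s).mul_const z)
      exact (hf1 _).hasDerivAt.comp w hi
  have hderivG : (deriv fun y => ∫ z, f (y + s * σ y * z) ∂γ)
      = fun y => ∫ z, deriv f (y + s * σ y * z) * (1 + s * deriv σ y * z) ∂γ :=
    funext fun y => (hg1 y).deriv
  -- bound for the slope of the Euler scheme in the parameter
  have hEbnd : ∀ (y z : ℝ), |(y + s * σ y * z) - (x + s * σ x * z)|
      ≤ (1 + s * B1 * |z|) * |y - x| := by
    intro y z
    calc |(y + s * σ y * z) - (x + s * σ x * z)| = |(y - x) + s * (σ y - σ x) * z| := by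
          congr 1; ring
      _ ≤ |y - x| + |s * (σ y - σ x) * z| := abs_add_le _ _
      _ = |y - x| + s * |σ y - σ x| * |z| := by rw [abs_mul, abs_mul, abs_of_nonneg hs0]
      _ ≤ |y - x| + s * (B1 * |y - x|) * |z| := by gcongr; exact lipσ y x
      _ = (1 + s * B1 * |z|) * |y - x| := by ring
  have hslopebnd : ∀ y : ℝ, y ≠ x → ∀ z : ℝ,
      |(deriv f (y + s * σ y * z) - deriv f (x + s * σ x * z)) / (y - x)|
        ≤ B3 * (1 + s * B1 * |z|) := by
    intro y hy z
    rw [abs_div, div_le_iff₀ (abs_pos.mpr (sub_ne_zero.mpr hy))]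
    calc |deriv f (y + s * σ y * z) - deriv f (x + s * σ x * z)|
        ≤ B3 * |(y + s * σ y * z) - (x + s * σ x * z)| := lipf' _ _
      _ ≤ B3 * ((1 + s * B1 * |z|) * |y - x|) := by
          have := hEbnd y z
          exact mul_le_mul_of_nonneg_left this hB30
      _ = B3 * (1 + s * B1 * |z|) * |y - x| := by ring
  have hT1bnd : ∀ y : ℝ, y ≠ x → ∀ z : ℝ,
      |((deriv f (y + s * σ y * z) - deriv f (x + s * σ x * z)) / (y - x))
        * (1 + s * deriv σ y * z)| ≤ B3 * (1 + s * B1 * |z|) ^ 2 := by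
    intro y hy z
    rw [abs_mul]
    calc _ ≤ (B3 * (1 + s * B1 * |z|)) * (1 + s * B1 * |z|) :=
          mul_le_mul (hslopebnd y hy z) (habs1 y z) (abs_nonneg _) (by positivity)
      _ = B3 * (1 + s * B1 * |z|) ^ 2 := by ring
  have ibound2 : Integrable (fun z : ℝ => B3 * (1 + s * B1 * |z|) ^ 2) γ := by
    have heq : (fun z : ℝ => B3 * (1 + s * B1 * |z|) ^ 2)
        = fun z => B3 + (2 * B3 * (s * B1)) * |z| + (B3 * (s * B1) ^ 2) * z ^ 2 := by
      funext z; rw [← sq_abs z]; ring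
    rw [heq]; exact my_integrable_poly _ _ _
  have iT1asm : ∀ y : ℝ, AEStronglyMeasurable (fun z =>
      ((deriv f (y + s * σ y * z) - deriv f (x + s * σ x * z)) / (y - x))
        * (1 + s * deriv σ y * z)) γ :=
    fun y => ((((hf'c.comp (haff y (s * σ y))).sub
      (hf'c.comp (haff x (s * σ x)))).div_const (y - x)).mul
        (haff 1 (s * deriv σ y))).aestronglyMeasurable
  have iT1 : ∀ y : ℝ, y ≠ x → Integrable (fun z =>
      ((deriv f (y + s * σ y * z) - deriv f (x + s * σ x * z)) / (y - x))
        * (1 + s * deriv σ y * z)) γ := by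
    intro y hy
    exact ibound2.mono' (iT1asm y)
      (ae_of_all _ fun z => by rw [Real.norm_eq_abs]; exact hT1bnd y hy z)
  -- the slope of g1 decomposes
  have hslope_eq : ∀ y : ℝ, y ≠ x →
      slope (fun w => ∫ z, deriv f (w + s * σ w * z) * (1 + s * deriv σ w * z) ∂γ) x y =
        (∫ z, ((deriv f (y + s * σ y * z) - deriv f (x + s * σ x * z)) / (y - x))
          * (1 + s * deriv σ y * z) ∂γ)
        + (s * ((deriv σ y - deriv σ x) / (y - x)))
            * ∫ z, z * deriv f (x + s * σ x * z) ∂γ := by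
    intro y hy
    have hyx : y - x ≠ 0 := sub_ne_zero.mpr hy
    rw [slope_def_field]
    beta_reduce
    rw [← integral_sub (i1 y) (i1 x), ← integral_div, ← integral_const_mul,
      ← integral_add (iT1 y hy) ((i2 x).const_mul _)]
    congr 1; funext z
    field_simp
    ring
  -- limit of the second part
  have hT2lim : Tendsto (fun y => (s * ((deriv σ y - deriv σ x) / (y - x)))
        * ∫ z, z * deriv f (x + s * σ x * z) ∂γ) (nhdsWithin x {x}ᶜ)
      (nhds (h * (σ x * deriv (deriv σ) x)
        * ∫ z, deriv (deriv f) (x + s * σ x * z) ∂γ)) := by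
    have h1 : Tendsto (fun y => (deriv σ y - deriv σ x) / (y - x)) (nhdsWithin x {x}ᶜ)
        (nhds (deriv (deriv σ) x)) := by
      have := hasDerivAt_iff_tendsto_slope.mp (hσ2 x).hasDerivAt
      exact this.congr fun y => slope_def_field _ _ _
    have h2 := (h1.const_mul s).mul_const (∫ z, z * deriv f (x + s * σ x * z) ∂γ)
    have heq : h * (σ x * deriv (deriv σ) x) * ∫ z, deriv (deriv f) (x + s * σ x * z) ∂γ
        = s * deriv (deriv σ) x * ∫ z, z * deriv f (x + s * σ x * z) ∂γ := by
      rw [hstein x, ← hss]; ring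
    rw [heq]
    exact h2
  -- limit of the first part, by dominated convergence
  have hT1lim : Tendsto (fun y => ∫ z,
        ((deriv f (y + s * σ y * z) - deriv f (x + s * σ x * z)) / (y - x))
          * (1 + s * deriv σ y * z) ∂γ) (nhdsWithin x {x}ᶜ)
      (nhds (∫ z, deriv (deriv f) (x + s * σ x * z) * (1 + s * deriv σ x * z) ^ 2 ∂γ)) := by
    apply tendsto_integral_filter_of_dominated_convergence
      (bound := fun z => B3 * (1 + s * B1 * |z|) ^ 2)
    · exact Filter.Eventually.of_forall iT1asm
    · filter_upwards [self_mem_nhdsWithin] with y hy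
      exact ae_of_all _ fun z => by
        rw [Real.norm_eq_abs]
        exact hT1bnd y (Set.mem_compl_singleton_iff.mp hy) z
    · exact ibound2
    · refine ae_of_all _ fun z => ?_
      have hφ : HasDerivAt (fun y => deriv f (y + s * σ y * z))
          (deriv (deriv f) (x + s * σ x * z) * (1 + s * deriv σ x * z)) x :=
        (hf2 _).hasDerivAt.comp x
          ((hasDerivAt_id x).add (((hσ1 x).hasDerivAt.const_mul s).mul_const z))
      have h1 := hasDerivAt_iff_tendsto_slope.mp hφ
      have h1' : Tendsto (fun y => (deriv f (y + s * σ y * z) - deriv f (x + s * σ x * z))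
            / (y - x)) (nhdsWithin x {x}ᶜ)
          (nhds (deriv (deriv f) (x + s * σ x * z) * (1 + s * deriv σ x * z))) :=
        h1.congr fun y => slope_def_field _ _ _
      have h2 : Tendsto (fun y => 1 + s * deriv σ y * z) (nhdsWithin x {x}ᶜ)
          (nhds (1 + s * deriv σ x * z)) :=
        (((continuous_const.add ((continuous_const.mul hσ'c).mul continuous_const)).tendsto x).mono_left
          nhdsWithin_le_nhds)
      have := h1'.mul h2
      convert this using 2
      ring
  -- second derivative at x
  have hstep2 : HasDerivAt
      (fun w => ∫ z, deriv f (w + s * σ w * z) * (1 + s * deriv σ w * z) ∂γ)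
      ((∫ z, deriv (deriv f) (x + s * σ x * z) * (1 + s * deriv σ x * z) ^ 2 ∂γ)
        + h * (σ x * deriv (deriv σ) x) * ∫ z, deriv (deriv f) (x + s * σ x * z) ∂γ) x := by
    rw [hasDerivAt_iff_tendsto_slope]
    refine Tendsto.congr' ?_ (hT1lim.add hT2lim)
    filter_upwards [self_mem_nhdsWithin] with y hy
    exact (hslope_eq y (Set.mem_compl_singleton_iff.mp hy)).symm
  rw [hderivG, hstep2.deriv]
  -- final bounds
  have hI2 : |∫ z, deriv (deriv f) (x + s * σ x * z) ∂γ| ≤ B3 := by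
    have h1 := norm_integral_le_of_norm_le (μ := γ) (integrable_const B3)
      (ae_of_all _ fun z => by rw [Real.norm_eq_abs]; exact hB3 (x + s * σ x * z))
    rw [integral_const] at h1
    simpa [measure_univ] using h1
  have hJint : Integrable (fun z : ℝ => B3 * (1 + s * deriv σ x * z) ^ 2) γ := by
    have heq : (fun z : ℝ => B3 * (1 + s * deriv σ x * z) ^ 2)
        = fun z => (B3 + (2 * B3 * (s * deriv σ x)) * z) + (B3 * (s * deriv σ x) ^ 2) * z ^ 2 := by
      funext z; ring
    rw [heq]
    exact ((integrable_const _).add (my_integrable_id.const_mul _)).add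
      (my_integrable_sq.const_mul _)
  have hJval : ∫ z, B3 * (1 + s * deriv σ x * z) ^ 2 ∂γ = B3 * (1 + (s * deriv σ x) ^ 2) := by
    have ia3 : Integrable (fun z : ℝ => 2 * B3 * (s * deriv σ x) * z) γ :=
      my_integrable_id.const_mul _
    have ia1 : Integrable (fun z : ℝ => B3 + 2 * B3 * (s * deriv σ x) * z) γ :=
      (integrable_const _).add ia3
    have ia2 : Integrable (fun z : ℝ => B3 * (s * deriv σ x) ^ 2 * z ^ 2) γ :=
      my_integrable_sq.const_mul _
    have heq : (fun z : ℝ => B3 * (1 + s * deriv σ x * z) ^ 2)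
        = fun z => (B3 + 2 * B3 * (s * deriv σ x) * z) + B3 * (s * deriv σ x) ^ 2 * z ^ 2 := by
      funext z; ring
    rw [heq, integral_add ia1 ia2, integral_add (integrable_const _) ia3,
      integral_const_mul, integral_const_mul, my_moment_one, my_moment_two, integral_const]
    simp [measure_univ]
    ring
  have hJ : |∫ z, deriv (deriv f) (x + s * σ x * z) * (1 + s * deriv σ x * z) ^ 2 ∂γ|
      ≤ B3 * (1 + (s * deriv σ x) ^ 2) := by
    have h1 : ‖∫ z, deriv (deriv f) (x + s * σ x * z) * (1 + s * deriv σ x * z) ^ 2 ∂γ‖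
        ≤ ∫ z, B3 * (1 + s * deriv σ x * z) ^ 2 ∂γ :=
      norm_integral_le_of_norm_le hJint (ae_of_all _ fun z => by
        rw [Real.norm_eq_abs, abs_mul, abs_of_nonneg (sq_nonneg (1 + s * deriv σ x * z))]
        exact mul_le_mul_of_nonneg_right (hB3 _) (sq_nonneg _))
    rw [Real.norm_eq_abs, hJval] at h1
    exact h1
  have hc2 : (s * deriv σ x) ^ 2 ≤ h * B1 ^ 2 := by
    have h1 : |deriv σ x| ^ 2 ≤ B1 ^ 2 := by
      have := hB1 x
      nlinarith [abs_nonneg (deriv σ x)]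
    rw [sq_abs] at h1
    calc (s * deriv σ x) ^ 2 = h * (deriv σ x) ^ 2 := by rw [← hss]; ring
      _ ≤ h * B1 ^ 2 := mul_le_mul_of_nonneg_left h1 hh.le
  have hterm2 : |h * (σ x * deriv (deriv σ) x)
      * ∫ z, deriv (deriv f) (x + s * σ x * z) ∂γ| ≤ h * B2 * B3 := by
    rw [abs_mul, abs_mul, abs_of_nonneg hh.le]
    exact mul_le_mul (mul_le_mul_of_nonneg_left (hB2 x) hh.le) hI2 (abs_nonneg _)
      (by positivity)
  calc |(∫ z, deriv (deriv f) (x + s * σ x * z) * (1 + s * deriv σ x * z) ^ 2 ∂γ)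
        + h * (σ x * deriv (deriv σ) x) * ∫ z, deriv (deriv f) (x + s * σ x * z) ∂γ|
      ≤ |∫ z, deriv (deriv f) (x + s * σ x * z) * (1 + s * deriv σ x * z) ^ 2 ∂γ|
        + |h * (σ x * deriv (deriv σ) x) * ∫ z, deriv (deriv f) (x + s * σ x * z) ∂γ| :=
        abs_add_le _ _
    _ ≤ B3 * (1 + (s * deriv σ x) ^ 2) + h * B2 * B3 := by linarith
    _ ≤ B3 * (1 + h * B1 ^ 2) + h * B2 * B3 := by nlinarith
    _ = B3 * (1 + (B1 ^ 2 + B2) * h) := by ring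
end

section
/- Second derivative bound for the one-step jump transition (b = σ = 0): let Pf(x) = (1−λh)·f(x − λ̃hγ(x)) + λh·E f(x + γ(x)U_h), with λ̃ = λEU, U_h = U − λ̃h, 0 < λh < 1. If γ ∈ C² with γ', γ'', γγ'' bounded and EU² < ∞, and f ∈ C² with bounded f', f'', then ‖(Pf)''‖_∞ ≤ (1 + Ch)‖f''‖_∞ + λh C'‖f'‖_∞, where C and C' depend only on ‖γ'‖_∞, ‖γγ''‖_∞, ‖γ''‖_∞, EU, EU², λ (and not on h ≤ 1/λ). -/
open MeasureTheory

set_option maxHeartbeats 2000000 in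
/-- Second derivative bound for the one-step jump transition (b = σ = 0). -/
theorem stmt19 (γ : ℝ → ℝ)
    (hγ1 : Differentiable ℝ γ) (hγ2 : Differentiable ℝ (deriv γ))
    (G1 G2 G3 : ℝ)
    (hG1 : ∀ x, |deriv γ x| ≤ G1)
    (hG2 : ∀ x, |deriv (deriv γ) x| ≤ G2)
    (hG3 : ∀ x, |γ x * deriv (deriv γ) x| ≤ G3)
    (lam : ℝ) (hlam : 0 < lam)
    (ν : Measure ℝ) [IsProbabilityMeasure ν]
    (hdensity : ν ≪ volume)
    (hm1 : Integrable (fun u : ℝ => u) ν)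
    (hm2 : Integrable (fun u : ℝ => u ^ 2) ν) :
    ∃ C C' : ℝ, 0 ≤ C ∧ 0 ≤ C' ∧
      ∀ h : ℝ, 0 < h → lam * h < 1 →
      ∀ f : ℝ → ℝ, Differentiable ℝ f → Differentiable ℝ (deriv f) →
      ∀ B1 B2 : ℝ, (∀ x, |deriv f x| ≤ B1) → (∀ x, |deriv (deriv f) x| ≤ B2) →
      ∀ x : ℝ,
        |deriv (deriv (fun y =>
            (1 - lam * h) * f (y - (lam * ∫ u, u ∂ν) * h * γ y)
              + lam * h * ∫ u, f (y + γ y * (u - (lam * ∫ v, v ∂ν) * h)) ∂ν)) x|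
          ≤ (1 + C * h) * B2 + lam * h * C' * B1 := by
  have hγc : Continuous γ := hγ1.continuous
  have hγ'c : Continuous (deriv γ) := hγ2.continuous
  have hM1int : Integrable (fun u : ℝ => |u|) ν := hm1.abs
  set m1 : ℝ := ∫ u, u ∂ν with hm1def
  set M1 : ℝ := ∫ u, |u| ∂ν with hM1def
  set M2 : ℝ := ∫ u, u ^ 2 ∂ν with hM2def
  have hM1nn : 0 ≤ M1 := integral_nonneg fun u => abs_nonneg u
  have hM2nn : 0 ≤ M2 := integral_nonneg fun u => sq_nonneg u
  have hG1nn : 0 ≤ G1 := (abs_nonneg _).trans (hG1 0)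
  have hG2nn : 0 ≤ G2 := (abs_nonneg _).trans (hG2 0)
  set S : ℝ := |m1| with hSdef
  have hSnn : 0 ≤ S := abs_nonneg _
  set K : ℝ := 1 + 2 * G1 * (M1 + S) + G1 ^ 2 * (M2 + 2 * S * M1 + S ^ 2) with hKdef
  have hKnn : 0 ≤ K := by rw [hKdef]; positivity
  clear_value K
  refine ⟨lam * S * G1 * (2 + S * G1) + lam * K, G2 * (M1 + 2 * S), ?_, ?_, ?_⟩
  · have h1 : 0 ≤ lam * S * G1 * (2 + S * G1) := by positivity
    have h2 : 0 ≤ lam * K := by positivity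
    linarith
  · positivity
  intro h hh hlh f hf1 hf2 B1 B2 hB1 hB2 x
  have hB1nn : 0 ≤ B1 := (abs_nonneg _).trans (hB1 0)
  have hB2nn : 0 ≤ B2 := (abs_nonneg _).trans (hB2 0)
  have hfc : Continuous f := hf1.continuous
  have hf'c : Continuous (deriv f) := hf2.continuous
  set c : ℝ := lam * m1 * h with hcdef
  clear_value c
  have hcabs : |c| = lam * h * S := by
    rw [hcdef, abs_mul, abs_mul, abs_of_pos hlam, abs_of_pos hh, hSdef]; ring
  have hlh1 : lam * h ≤ 1 := hlh.le
  have hlhpos : 0 < lam * h := mul_pos hlam hh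
  have hcS : |c| ≤ S := by
    rw [hcabs]; nlinarith
  -- Lipschitz bound for f
  have hfL : ∀ a b : ℝ, |f a - f b| ≤ B1 * |a - b| := by
    intro a b
    have := Convex.norm_image_sub_le_of_norm_deriv_le (f := f) (s := Set.univ)
      (fun z _ => hf1 z) (fun z _ => by rw [Real.norm_eq_abs]; exact hB1 z)
      convex_univ (Set.mem_univ b) (Set.mem_univ a)
    simpa [Real.norm_eq_abs] using this
  -- bound on |u - c|
  have hub : ∀ u : ℝ, |u - c| ≤ |u| + S := fun u =>
    (abs_sub _ _).trans (by linarith [hcS])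
  -- basic integrable functions
  have hs_int : Integrable (fun u : ℝ => |u| + S) ν := hM1int.add (integrable_const S)
  have hs2_eq : (fun u : ℝ => (|u| + S) ^ 2) = fun u : ℝ => u ^ 2 + 2 * S * |u| + S ^ 2 :=
    funext fun u => by rw [add_sq, sq_abs]; ring
  have hint_a : Integrable (fun u : ℝ => u ^ 2 + 2 * S * |u|) ν :=
    hm2.add (hM1int.const_mul (2 * S))
  have hs2_int : Integrable (fun u : ℝ => (|u| + S) ^ 2) ν := by
    rw [hs2_eq]
    exact hint_a.add (integrable_const _)
  have hq_eq : (fun u : ℝ => (1 + G1 * (|u| + S)) ^ 2)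
      = fun u : ℝ => 1 + 2 * G1 * (|u| + S) + G1 ^ 2 * (|u| + S) ^ 2 :=
    funext fun u => by ring
  have hint_b : Integrable (fun u : ℝ => 1 + 2 * G1 * (|u| + S)) ν :=
    (integrable_const 1).add (hs_int.const_mul (2 * G1))
  have hq_int : Integrable (fun u : ℝ => (1 + G1 * (|u| + S)) ^ 2) ν := by
    rw [hq_eq]
    exact hint_b.add (hs2_int.const_mul (G1 ^ 2))
  have hbound1_int : Integrable (fun u : ℝ => B1 * (1 + G1 * (|u| + S))) ν :=
    ((integrable_const 1).add (hs_int.const_mul G1)).const_mul B1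
  have hbound2_int : Integrable
      (fun u : ℝ => B2 * (1 + G1 * (|u| + S)) ^ 2 + B1 * (G2 * (|u| + S))) ν :=
    (hq_int.const_mul B2).add ((hs_int.const_mul G2).const_mul B1)
  -- integral values
  have hs_val : ∫ u, (|u| + S) ∂ν = M1 + S := by
    rw [integral_add hM1int (integrable_const S), integral_const]
    simp [hM1def]
  have hs2_val : ∫ u, (|u| + S) ^ 2 ∂ν = M2 + 2 * S * M1 + S ^ 2 := by
    rw [hs2_eq, integral_add hint_a (integrable_const _),
      integral_add hm2 (hM1int.const_mul (2 * S)), integral_const_mul, integral_const]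
    simp [hM1def, hM2def, measure_univ]
  have hq_val : ∫ u, (1 + G1 * (|u| + S)) ^ 2 ∂ν = K := by
    rw [hq_eq, integral_add hint_b
      (hs2_int.const_mul (G1 ^ 2)), integral_add (integrable_const 1) (hs_int.const_mul (2 * G1)),
      integral_const_mul, integral_const_mul, hs_val, hs2_val, integral_const, hKdef]
    simp [measure_univ]
  -- continuity of u ↦ y + γ y * (u - c)
  have hcontφ : ∀ y : ℝ, Continuous (fun u : ℝ => y + γ y * (u - c)) := fun y =>
    continuous_const.add (continuous_const.mul (continuous_id.sub continuous_const))
  -- derivative of y ↦ y + γ y * (u - c)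
  have hφd : ∀ (u y : ℝ), HasDerivAt (fun z : ℝ => z + γ z * (u - c))
      (1 + deriv γ y * (u - c)) y := fun u y =>
    (hasDerivAt_id y).add ((hγ1 y).hasDerivAt.mul_const _)
  -- derivative of y ↦ z - c * γ z
  have hψd : ∀ y : ℝ, HasDerivAt (fun z : ℝ => z - c * γ z) (1 - c * deriv γ y) y := fun y =>
    (hasDerivAt_id y).sub ((hγ1 y).hasDerivAt.const_mul c)
  -- pointwise derivative bounds for integrands
  have hbd1 : ∀ (y u : ℝ), |deriv f (y + γ y * (u - c)) * (1 + deriv γ y * (u - c))|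
      ≤ B1 * (1 + G1 * (|u| + S)) := by
    intro y u
    rw [abs_mul]
    have h1 : |1 + deriv γ y * (u - c)| ≤ 1 + G1 * (|u| + S) := by
      refine (abs_add_le _ _).trans ?_
      rw [abs_one, abs_mul]
      have := mul_le_mul (hG1 y) (hub u) (abs_nonneg _) hG1nn
      linarith
    exact mul_le_mul (hB1 _) h1 (abs_nonneg _) hB1nn
  have hbd2 : ∀ (y u : ℝ),
      |deriv (deriv f) (y + γ y * (u - c)) * (1 + deriv γ y * (u - c)) * (1 + deriv γ y * (u - c))
        + deriv f (y + γ y * (u - c)) * (deriv (deriv γ) y * (u - c))|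
      ≤ B2 * (1 + G1 * (|u| + S)) ^ 2 + B1 * (G2 * (|u| + S)) := by
    intro y u
    have h1 : |1 + deriv γ y * (u - c)| ≤ 1 + G1 * (|u| + S) := by
      refine (abs_add_le _ _).trans ?_
      rw [abs_one, abs_mul]
      have := mul_le_mul (hG1 y) (hub u) (abs_nonneg _) hG1nn
      linarith
    have h1nn : (0:ℝ) ≤ 1 + G1 * (|u| + S) := by positivity
    refine (abs_add_le _ _).trans ?_
    have hA : |deriv (deriv f) (y + γ y * (u - c)) * (1 + deriv γ y * (u - c))
        * (1 + deriv γ y * (u - c))| ≤ B2 * (1 + G1 * (|u| + S)) ^ 2 := by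
      rw [abs_mul, abs_mul, sq]
      calc |deriv (deriv f) (y + γ y * (u - c))| * |1 + deriv γ y * (u - c)|
            * |1 + deriv γ y * (u - c)|
          ≤ B2 * (1 + G1 * (|u| + S)) * (1 + G1 * (|u| + S)) := by
            refine mul_le_mul (mul_le_mul (hB2 _) h1 (abs_nonneg _) hB2nn) h1 (abs_nonneg _) ?_
            positivity
        _ = B2 * ((1 + G1 * (|u| + S)) * (1 + G1 * (|u| + S))) := by ring
    have hBpart : |deriv f (y + γ y * (u - c)) * (deriv (deriv γ) y * (u - c))|
        ≤ B1 * (G2 * (|u| + S)) := by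
      rw [abs_mul, abs_mul]
      exact mul_le_mul (hB1 _) (mul_le_mul (hG2 y) (hub u) (abs_nonneg _) hG2nn)
        (by positivity) hB1nn
    linarith
  -- first differentiation under the integral sign, at every point
  have key1 : ∀ y : ℝ,
      Integrable (fun u : ℝ => deriv f (y + γ y * (u - c)) * (1 + deriv γ y * (u - c))) ν ∧
      HasDerivAt (fun z : ℝ => ∫ u, f (z + γ z * (u - c)) ∂ν)
        (∫ u, deriv f (y + γ y * (u - c)) * (1 + deriv γ y * (u - c)) ∂ν) y := by
    intro y
    apply hasDerivAt_integral_of_dominated_loc_of_deriv_le (s := Metric.ball _ 1)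
      (F' := fun z u => deriv f (z + γ z * (u - c)) * (1 + deriv γ z * (u - c)))
      (bound := fun u : ℝ => B1 * (1 + G1 * (|u| + S))) (Metric.ball_mem_nhds _ one_pos)
    · exact Filter.Eventually.of_forall fun z =>
        (hfc.comp (hcontφ z)).aestronglyMeasurable
    · -- integrability of u ↦ f (y + γ y * (u - c))
      have hg_int : Integrable (fun u : ℝ => |f y| + B1 * |γ y| * (|u| + S)) ν :=
        (integrable_const (|f y|)).add (hs_int.const_mul (B1 * |γ y|))
      refine Integrable.mono hg_int
        ((hfc.comp (hcontφ y)).aestronglyMeasurable)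
        (Filter.Eventually.of_forall fun u => ?_)
      rw [Real.norm_eq_abs, Real.norm_eq_abs]
      have h1 : |f (y + γ y * (u - c)) - f y| ≤ B1 * (|γ y| * |u - c|) := by
        have := hfL (y + γ y * (u - c)) y
        simpa [add_sub_cancel_left, abs_mul] using this
      have h2 : |γ y| * |u - c| ≤ |γ y| * (|u| + S) :=
        mul_le_mul_of_nonneg_left (hub u) (abs_nonneg _)
      have h3 : |f (y + γ y * (u - c))| ≤ |f y| + B1 * (|γ y| * (|u| + S)) := by
        have h4 : |f (y + γ y * (u - c))| ≤ |f y| + |f (y + γ y * (u - c)) - f y| := by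
          simpa using abs_add_le (f y) (f (y + γ y * (u - c)) - f y)
        nlinarith [mul_le_mul_of_nonneg_left h2 hB1nn]
      have h5 : (0:ℝ) ≤ |f y| + B1 * |γ y| * (|u| + S) := by positivity
      rw [abs_of_nonneg h5]
      nlinarith
    · exact ((hf'c.comp (hcontφ y)).mul
        (continuous_const.add (continuous_const.mul
          (continuous_id.sub continuous_const)))).aestronglyMeasurable
    · exact Filter.Eventually.of_forall fun u z _ => by
        rw [Real.norm_eq_abs]; exact hbd1 z u
    · exact hbound1_int
    · exact Filter.Eventually.of_forall fun u z _ =>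
        ((hf1 _).hasDerivAt.comp z (hφd u z))
  -- second differentiation under the integral sign, at the point x
  have key2 :
      Integrable (fun u : ℝ =>
        deriv (deriv f) (x + γ x * (u - c)) * (1 + deriv γ x * (u - c))
            * (1 + deriv γ x * (u - c))
          + deriv f (x + γ x * (u - c)) * (deriv (deriv γ) x * (u - c))) ν ∧
      HasDerivAt (fun z : ℝ =>
          ∫ u, deriv f (z + γ z * (u - c)) * (1 + deriv γ z * (u - c)) ∂ν)
        (∫ u, (deriv (deriv f) (x + γ x * (u - c)) * (1 + deriv γ x * (u - c))
            * (1 + deriv γ x * (u - c))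
          + deriv f (x + γ x * (u - c)) * (deriv (deriv γ) x * (u - c))) ∂ν) x := by
    apply hasDerivAt_integral_of_dominated_loc_of_deriv_le (s := Metric.ball _ 1)
      (F' := fun z u =>
        deriv (deriv f) (z + γ z * (u - c)) * (1 + deriv γ z * (u - c))
            * (1 + deriv γ z * (u - c))
          + deriv f (z + γ z * (u - c)) * (deriv (deriv γ) z * (u - c)))
      (bound := fun u : ℝ => B2 * (1 + G1 * (|u| + S)) ^ 2 + B1 * (G2 * (|u| + S))) (Metric.ball_mem_nhds _ one_pos)
    · exact Filter.Eventually.of_forall fun z =>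
        ((hf'c.comp (hcontφ z)).mul
          (continuous_const.add (continuous_const.mul
            (continuous_id.sub continuous_const)))).aestronglyMeasurable
    · exact (key1 x).1
    · -- measurability of the second integrand
      have hφm : Measurable (fun u : ℝ => x + γ x * (u - c)) := (hcontφ x).measurable
      have hm2f : Measurable (deriv (deriv f)) := measurable_deriv _
      have hlin : Measurable (fun u : ℝ => 1 + deriv γ x * (u - c)) :=
        (measurable_const.add (measurable_const.mul (measurable_id.sub measurable_const)))
      have hlin2 : Measurable (fun u : ℝ => deriv (deriv γ) x * (u - c)) :=
        measurable_const.mul (measurable_id.sub measurable_const)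
      exact ((((hm2f.comp hφm).mul hlin).mul hlin).add
        (((hf'c.measurable.comp hφm)).mul hlin2)).aestronglyMeasurable
    · exact Filter.Eventually.of_forall fun u z _ => by
        rw [Real.norm_eq_abs]; exact hbd2 z u
    · exact hbound2_int
    · refine Filter.Eventually.of_forall fun u z _ => ?_
      have h1 : HasDerivAt (fun z : ℝ => deriv f (z + γ z * (u - c)))
          (deriv (deriv f) (z + γ z * (u - c)) * (1 + deriv γ z * (u - c))) z :=
        (hf2 _).hasDerivAt.comp z (hφd u z)
      have h2 : HasDerivAt (fun z : ℝ => 1 + deriv γ z * (u - c))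
          (deriv (deriv γ) z * (u - c)) z :=
        ((hγ2 z).hasDerivAt.mul_const _).const_add 1
      exact h1.mul h2
  -- identify the first derivative of the transition operator
  have e1 : deriv (fun y =>
        (1 - lam * h) * f (y - c * γ y) + lam * h * ∫ u, f (y + γ y * (u - c)) ∂ν)
      = fun y => (1 - lam * h) * (deriv f (y - c * γ y) * (1 - c * deriv γ y))
        + lam * h * ∫ u, deriv f (y + γ y * (u - c)) * (1 + deriv γ y * (u - c)) ∂ν := by
    funext y
    exact HasDerivAt.deriv
      ((((hf1 _).hasDerivAt.comp y (hψd y)).const_mul (1 - lam * h)).add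
        (((key1 y).2).const_mul (lam * h)))
  -- identify the second derivative at x
  have e2 : deriv (fun y =>
        (1 - lam * h) * (deriv f (y - c * γ y) * (1 - c * deriv γ y))
        + lam * h * ∫ u, deriv f (y + γ y * (u - c)) * (1 + deriv γ y * (u - c)) ∂ν) x
      = (1 - lam * h) * (deriv (deriv f) (x - c * γ x) * (1 - c * deriv γ x)
            * (1 - c * deriv γ x)
          + deriv f (x - c * γ x) * -(c * deriv (deriv γ) x))
        + lam * h * ∫ u, (deriv (deriv f) (x + γ x * (u - c)) * (1 + deriv γ x * (u - c))
            * (1 + deriv γ x * (u - c))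
          + deriv f (x + γ x * (u - c)) * (deriv (deriv γ) x * (u - c))) ∂ν := by
    apply HasDerivAt.deriv
    have h1 : HasDerivAt (fun y : ℝ => deriv f (y - c * γ y))
        (deriv (deriv f) (x - c * γ x) * (1 - c * deriv γ x)) x :=
      (hf2 _).hasDerivAt.comp x (hψd x)
    have h2 : HasDerivAt (fun y : ℝ => 1 - c * deriv γ y)
        (-(c * deriv (deriv γ) x)) x :=
      ((hγ2 x).hasDerivAt.const_mul c).const_sub 1
    exact ((h1.mul h2).const_mul (1 - lam * h)).add ((key2.2).const_mul (lam * h))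
  rw [e1, e2]
  -- now bound everything
  set Q : ℝ := ∫ u, (deriv (deriv f) (x + γ x * (u - c)) * (1 + deriv γ x * (u - c))
      * (1 + deriv γ x * (u - c))
    + deriv f (x + γ x * (u - c)) * (deriv (deriv γ) x * (u - c))) ∂ν with hQdef
  clear_value Q
  have hQbd : |Q| ≤ B2 * K + B1 * (G2 * (M1 + S)) := by
    have h1 : |Q| ≤ ∫ u, |deriv (deriv f) (x + γ x * (u - c)) * (1 + deriv γ x * (u - c))
        * (1 + deriv γ x * (u - c))
      + deriv f (x + γ x * (u - c)) * (deriv (deriv γ) x * (u - c))| ∂ν := by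
      rw [hQdef, ← Real.norm_eq_abs]
      exact (norm_integral_le_integral_norm _).trans (le_of_eq (by simp [Real.norm_eq_abs]))
    have h2 : ∫ u, |deriv (deriv f) (x + γ x * (u - c)) * (1 + deriv γ x * (u - c))
        * (1 + deriv γ x * (u - c))
      + deriv f (x + γ x * (u - c)) * (deriv (deriv γ) x * (u - c))| ∂ν
        ≤ ∫ u, (B2 * (1 + G1 * (|u| + S)) ^ 2 + B1 * (G2 * (|u| + S))) ∂ν :=
      integral_mono key2.1.abs hbound2_int fun u => hbd2 x u
    have h3 : ∫ u, (B2 * (1 + G1 * (|u| + S)) ^ 2 + B1 * (G2 * (|u| + S))) ∂ν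
        = B2 * K + B1 * (G2 * (M1 + S)) := by
      have hi1 : Integrable (fun u : ℝ => B2 * (1 + G1 * (|u| + S)) ^ 2) ν :=
        hq_int.const_mul B2
      have hi2 : Integrable (fun u : ℝ => B1 * (G2 * (|u| + S))) ν :=
        (hs_int.const_mul G2).const_mul B1
      rw [integral_add hi1 hi2, integral_const_mul, integral_const_mul, integral_const_mul,
        hq_val, hs_val]
    linarith
  -- bound the local (drift) part
  have hV1 : |deriv (deriv f) (x - c * γ x) * (1 - c * deriv γ x) * (1 - c * deriv γ x)
      + deriv f (x - c * γ x) * -(c * deriv (deriv γ) x)|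
      ≤ B2 * (1 + |c| * G1) ^ 2 + B1 * (|c| * G2) := by
    have h1 : |1 - c * deriv γ x| ≤ 1 + |c| * G1 := by
      refine (abs_sub _ _).trans ?_
      rw [abs_one, abs_mul]
      have := mul_le_mul_of_nonneg_left (hG1 x) (abs_nonneg c)
      linarith
    have h1nn : (0:ℝ) ≤ 1 + |c| * G1 := by positivity
    refine (abs_add_le _ _).trans ?_
    have hA : |deriv (deriv f) (x - c * γ x) * (1 - c * deriv γ x) * (1 - c * deriv γ x)|
        ≤ B2 * (1 + |c| * G1) ^ 2 := by
      rw [abs_mul, abs_mul, sq]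
      calc |deriv (deriv f) (x - c * γ x)| * |1 - c * deriv γ x| * |1 - c * deriv γ x|
          ≤ B2 * (1 + |c| * G1) * (1 + |c| * G1) := by
            refine mul_le_mul (mul_le_mul (hB2 _) h1 (abs_nonneg _) hB2nn) h1 (abs_nonneg _) ?_
            positivity
        _ = B2 * ((1 + |c| * G1) * (1 + |c| * G1)) := by ring
    have hBp : |deriv f (x - c * γ x) * -(c * deriv (deriv γ) x)| ≤ B1 * (|c| * G2) := by
      rw [abs_mul, abs_neg, abs_mul]
      exact mul_le_mul (hB1 _) (mul_le_mul_of_nonneg_left (hG2 x) (abs_nonneg c))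
        (by positivity) hB1nn
    linarith
  -- arithmetic: combine everything
  have hstep : (1 + |c| * G1) ^ 2 ≤ 1 + lam * S * G1 * (2 + S * G1) * h := by
    rw [hcabs]
    have e : (1 + lam * h * S * G1) ^ 2
        = 1 + 2 * (lam * h) * (S * G1) + (lam * h) * ((lam * h) * (S * G1) ^ 2) := by ring
    rw [e]
    have h1 : (lam * h) * ((lam * h) * (S * G1) ^ 2) ≤ (lam * h) * (1 * (S * G1) ^ 2) := by
      have : (lam * h) * (S * G1) ^ 2 ≤ 1 * (S * G1) ^ 2 :=
        mul_le_mul_of_nonneg_right hlh1 (by positivity)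
      exact mul_le_mul_of_nonneg_left this hlhpos.le
    nlinarith
  have habs_split : |(1 - lam * h) * (deriv (deriv f) (x - c * γ x) * (1 - c * deriv γ x)
        * (1 - c * deriv γ x)
      + deriv f (x - c * γ x) * -(c * deriv (deriv γ) x)) + lam * h * Q|
      ≤ (1 - lam * h) * (B2 * (1 + |c| * G1) ^ 2 + B1 * (|c| * G2))
        + lam * h * (B2 * K + B1 * (G2 * (M1 + S))) := by
    refine (abs_add_le _ _).trans ?_
    rw [abs_mul, abs_mul, abs_of_nonneg (by linarith : (0:ℝ) ≤ 1 - lam * h),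
      abs_of_pos hlhpos]
    exact add_le_add (mul_le_mul_of_nonneg_left hV1 (by linarith))
      (mul_le_mul_of_nonneg_left hQbd hlhpos.le)
  refine habs_split.trans ?_
  -- final arithmetic
  have t1 : (1 - lam * h) * (B2 * (1 + |c| * G1) ^ 2)
      ≤ (1 + lam * S * G1 * (2 + S * G1) * h) * B2 := by
    have h1 : (1 - lam * h) * (B2 * (1 + |c| * G1) ^ 2) ≤ 1 * (B2 * (1 + |c| * G1) ^ 2) :=
      mul_le_mul_of_nonneg_right (by linarith) (by positivity)
    have h2 : B2 * (1 + |c| * G1) ^ 2 ≤ B2 * (1 + lam * S * G1 * (2 + S * G1) * h) :=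
      mul_le_mul_of_nonneg_left hstep hB2nn
    nlinarith
  have t2 : (1 - lam * h) * (B1 * (|c| * G2)) ≤ lam * h * (S * G2 * B1) := by
    rw [hcabs]
    nlinarith [mul_nonneg (mul_nonneg (mul_nonneg (mul_nonneg hlhpos.le hlhpos.le) hB1nn) hSnn)
      hG2nn]
  have expand : (1 - lam * h) * (B2 * (1 + |c| * G1) ^ 2 + B1 * (|c| * G2))
      + lam * h * (B2 * K + B1 * (G2 * (M1 + S)))
      = (1 - lam * h) * (B2 * (1 + |c| * G1) ^ 2) + (1 - lam * h) * (B1 * (|c| * G2))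
        + (lam * h * (K * B2) + lam * h * (B1 * (G2 * (M1 + S)))) := by ring
  have goal_eq : (1 + (lam * S * G1 * (2 + S * G1) + lam * K) * h) * B2
      + lam * h * (G2 * (M1 + 2 * S)) * B1
      = (1 + lam * S * G1 * (2 + S * G1) * h) * B2 + lam * h * (K * B2)
        + (lam * h * (S * G2 * B1) + lam * h * (B1 * (G2 * (M1 + S)))) := by ring
  rw [expand, goal_eq]
  linarith [t1, t2]
end
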